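/- arXiv:1209.3443 — 6 statements merged into one kernel-verified Lean document; each statement's English description precedes it below -/
import Mathlib

section
/- Every countable-dimensional metric space (a countable union of zero-dimensional subspaces) is a C-space. -/
open Set TopologicalSpace FirstOrder

universe u

/-- `U` is a cover of `X` by open sets. -/
def IsOpenCover {X : Type u} [TopologicalSpace X] (U : Set (Set X)) : Prop :=
  (∀ s ∈ U, IsOpen s) ∧ ⋃₀ U = Set.univ

/-- `V` refines `U`: every member of `V` is contained in some member of `U`. -/
def Refines {X : Type u} (V U : Set (Set X)) : Prop :=
  ∀ v ∈ V, ∃ u ∈ U, v ⊆ u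

/-- `X` is a C-space (has property C): every sequence of open covers admits a sequence of
families of pairwise disjoint open sets, the `i`-th refining the `i`-th cover, whose union
covers `X`. -/
def IsCSpace (X : Type u) [TopologicalSpace X] : Prop :=
  ∀ U : ℕ → Set (Set X), (∀ i, IsOpenCover (U i)) →
    ∃ V : ℕ → Set (Set X),
      (∀ i, (∀ s ∈ V i, IsOpen s) ∧ (V i).PairwiseDisjoint id ∧ Refines (V i) (U i)) ∧
      (⋃ i, ⋃₀ (V i)) = Set.univ

/-- `X` is an `m`-C-space: property C restricted to `m`-element open covers. -/
def IsMCSpace (m : ℕ) (X : Type u) [TopologicalSpace X] : Prop :=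
  ∀ U : ℕ → Fin m → Set X, (∀ i j, IsOpen (U i j)) → (∀ i, (⋃ j, U i j) = Set.univ) →
    ∃ V : ℕ → Set (Set X),
      (∀ i, (∀ s ∈ V i, IsOpen s) ∧ (V i).PairwiseDisjoint id ∧ ∀ v ∈ V i, ∃ j, v ⊆ U i j) ∧
      (⋃ i, ⋃₀ (V i)) = Set.univ

/-- Covering dimension at most `n`: every finite open cover has a finite open refinement
of order at most `n + 1`. -/
def CovDimLE (X : Type u) [TopologicalSpace X] (n : ℕ) : Prop :=
  ∀ U : Set (Set X), U.Finite → IsOpenCover U →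
    ∃ V : Set (Set X), V.Finite ∧ IsOpenCover V ∧ Refines V U ∧
      ∀ x : X, {v ∈ V | x ∈ v}.ncard ≤ n + 1

/-- The covering dimension, as an extended natural number (`⊤` if infinite dimensional). -/
noncomputable def covDim (X : Type u) [TopologicalSpace X] : ℕ∞ :=
  sInf ((fun n : ℕ => (n : ℕ∞)) '' {n : ℕ | CovDimLE X n})

section Auxiliary

open EMetric ENNReal

/-- From zero covering dimension (for finite covers): clopen separation of a closed set
inside an open set. -/
lemma clopen_sep {Z : Type*} [TopologicalSpace Z] (h : CovDimLE Z 0)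
    {A W : Set Z} (hA : IsClosed A) (hW : IsOpen W) (hAW : A ⊆ W) :
    ∃ C : Set Z, IsClopen C ∧ A ⊆ C ∧ C ⊆ W := by
  obtain ⟨V, hVfin, ⟨hVopen, hVcov⟩, hVref, hVord⟩ :=
    h {W, Aᶜ} (Set.Finite.insert _ (Set.finite_singleton _))
      ⟨by rintro s (rfl | rfl); exact hW; exact hA.isOpen_compl,
       by apply eq_univ_of_forall; intro x
          by_cases hx : x ∈ W
          · exact ⟨W, Or.inl rfl, hx⟩
          · exact ⟨Aᶜ, Or.inr rfl, fun hxA => hx (hAW hxA)⟩⟩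
  refine ⟨⋃₀ {v ∈ V | (v ∩ A).Nonempty}, ⟨?_, ?_⟩, ?_, ?_⟩
  · -- closed: complement is the union of the others
    have : (⋃₀ {v ∈ V | (v ∩ A).Nonempty})ᶜ = ⋃₀ {v ∈ V | ¬(v ∩ A).Nonempty} := by
      apply Set.eq_of_subset_of_subset
      · intro x hx
        have : x ∈ ⋃₀ V := hVcov ▸ mem_univ x
        obtain ⟨v, hv, hxv⟩ := this
        refine ⟨v, ⟨hv, fun hne => hx ⟨v, ⟨hv, hne⟩, hxv⟩⟩, hxv⟩
      · rintro x ⟨v, ⟨hv, hne⟩, hxv⟩ ⟨w, ⟨hw, hwe⟩, hxw⟩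
        have hvw : v ≠ w := by rintro rfl; exact hne hwe
        have h2 : {u ∈ V | x ∈ u}.ncard ≤ 1 := hVord x
        have hsub : {v, w} ⊆ {u ∈ V | x ∈ u} := by
          rintro u (rfl | rfl); exact ⟨hv, hxv⟩; exact ⟨hw, hxw⟩
        have : ({v, w} : Set (Set Z)).ncard ≤ {u ∈ V | x ∈ u}.ncard :=
          Set.ncard_le_ncard hsub (hVfin.subset (sep_subset _ _))
        rw [Set.ncard_pair hvw] at this; omega
    rw [← isOpen_compl_iff, this]
    exact isOpen_sUnion fun v ⟨hv, _⟩ => hVopen v hv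
  · exact isOpen_sUnion fun v ⟨hv, _⟩ => hVopen v hv
  · intro x hx
    have : x ∈ ⋃₀ V := hVcov ▸ mem_univ x
    obtain ⟨v, hv, hxv⟩ := this
    exact ⟨v, ⟨hv, ⟨x, hxv, hx⟩⟩, hxv⟩
  · rintro x ⟨v, ⟨hv, y, hyv, hyA⟩, hxv⟩
    obtain ⟨s, hs, hvs⟩ := hVref v hv
    rcases hs with rfl | rfl
    · exact hvs hxv
    · exact absurd (hvs hyv) (by simpa using hyA)

lemma ee_pos (n : ℕ) : 0 < ((2:ℝ≥0∞)⁻¹ ^ n) :=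
  ENNReal.pow_pos (by norm_num) n

lemma ee_ne_top (n : ℕ) : ((2:ℝ≥0∞)⁻¹ ^ n) ≠ ⊤ := by
  apply ENNReal.pow_ne_top; simp

lemma ee_succ_add (n : ℕ) : ((2:ℝ≥0∞)⁻¹ ^ (n+1)) + (2:ℝ≥0∞)⁻¹ ^ (n+1) = (2:ℝ≥0∞)⁻¹ ^ n := by
  rw [← two_mul, pow_succ, ← mul_assoc, mul_comm (2:ℝ≥0∞),
    mul_assoc, ENNReal.mul_inv_cancel (by norm_num) (by norm_num), mul_one]

lemma ee_anti (n m : ℕ) (h : n ≤ m) : ((2:ℝ≥0∞)⁻¹ ^ m) ≤ (2:ℝ≥0∞)⁻¹ ^ n :=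
  pow_le_pow_of_le_one (by positivity) (by simp [ENNReal.inv_le_one]) h

lemma ee_lt (n m : ℕ) (h : n < m) : ((2:ℝ≥0∞)⁻¹ ^ m) < (2:ℝ≥0∞)⁻¹ ^ n := by
  calc ((2:ℝ≥0∞)⁻¹ ^ m) ≤ (2:ℝ≥0∞)⁻¹ ^ (n+1) := ee_anti _ _ h
  _ < (2:ℝ≥0∞)⁻¹ ^ n := by
      conv_rhs => rw [← ee_succ_add n]
      exact ENNReal.lt_add_right (ee_ne_top _) (ee_pos _).ne'

/-- Stone-type construction: in a metric space with the clopen separation property,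
every open cover (indexed) has a pairwise disjoint open refinement covering the space. -/
theorem main_construction {Z : Type*} [MetricSpace Z] {ι : Type*}
    (hsep : ∀ A W : Set Z, IsClosed A → IsOpen W → A ⊆ W →
      ∃ C : Set Z, IsClopen C ∧ A ⊆ C ∧ C ⊆ W)
    (u : ι → Set Z) (huo : ∀ a, IsOpen (u a)) (hucov : ∀ x, ∃ a, x ∈ u a) :
    ∃ D : ℕ × ι → Set Z, (∀ k, IsOpen (D k)) ∧ Pairwise (Function.onFun Disjoint D) ∧
      (∀ k, D k ⊆ u k.2) ∧ (⋃ k, D k) = univ := by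
  classical
  let r : ι → ι → Prop := WellOrderingRel
  have hwo : IsWellOrder ι r := inferInstance
  have hwf : WellFounded r := hwo.wf
  set G : ℕ → ι → Set Z := fun n a =>
    {x | (2:ℝ≥0∞)⁻¹ ^ n ≤ infEdist x (u a)ᶜ} ∩ (⋂ b, ⋂ _ : r b a, (u b)ᶜ) with hG
  have hGclosed : ∀ n a, IsClosed (G n a) := fun n a =>
    (isClosed_le continuous_const continuous_infEdist).inter
      (isClosed_iInter fun b => isClosed_iInter fun _ => (huo b).isClosed_compl)
  have hGcov : ∀ x : Z, ∃ n a, x ∈ G n a := by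
    intro x
    have hne : {a | x ∈ u a}.Nonempty := hucov x
    set a := hwf.min _ hne with ha
    have hxa : x ∈ u a := hwf.min_mem _ hne
    have hpos : 0 < infEdist x (u a)ᶜ := by
      show 0 < Metric.infEDist _ _; rw [infEdist_pos_iff_notMem_closure, (huo a).isClosed_compl.closure_eq]
      simpa using hxa
    obtain ⟨n, hn⟩ := ENNReal.exists_inv_two_pow_lt hpos.ne'
    refine ⟨n, a, hn.le, ?_⟩
    simp only [mem_iInter]
    intro b hb hxb
    exact hwf.not_lt_min _ (show b ∈ _ from hxb) hb
  have hGnot : ∀ n a b, r b a → ∀ x ∈ G n a, x ∉ u b := by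
    intro n a b hb x hx
    have := hx.2
    simp only [mem_iInter] at this
    exact this b hb
  have hGsep : ∀ n (a b : ι), a ≠ b → ∀ x ∈ G n a, ∀ y ∈ G n b,
      (2:ℝ≥0∞)⁻¹ ^ n ≤ edist x y := by
    have key : ∀ n (a b : ι), r b a → ∀ x ∈ G n a, ∀ y ∈ G n b,
        (2:ℝ≥0∞)⁻¹ ^ n ≤ edist x y := by
      intro n a b hb x hx y hy
      have hxb : x ∈ (u b)ᶜ := hGnot n a b hb x hx
      calc (2:ℝ≥0∞)⁻¹ ^ n ≤ infEdist y (u b)ᶜ := hy.1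
        _ ≤ edist y x := infEdist_le_edist_of_mem hxb
        _ = edist x y := edist_comm y x
    intro n a b hab x hx y hy
    rcases trichotomous_of r a b with h | h | h
    · rw [edist_comm]; exact key n b a h y hy x hx
    · exact absurd h hab
    · exact key n a b h x hx y hy
  set H : ℕ → ι → Set Z := fun n a => {x | infEdist x (G n a) < (2:ℝ≥0∞)⁻¹ ^ (n+2)} with hH
  have hHopen : ∀ n a, IsOpen (H n a) := fun n a =>
    isOpen_lt continuous_infEdist continuous_const
  have hGH : ∀ n a, G n a ⊆ H n a := fun n a x hx => by
    show Metric.infEDist x (G n a) < _; rw [infEdist_zero_of_mem hx]; exact ee_pos (n+2)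
  have hHu : ∀ n a, H n a ⊆ u a := by
    intro n a x hx
    obtain ⟨y, hyG, hxy⟩ := infEdist_lt_iff.mp hx
    by_contra hxu
    have : infEdist y (u a)ᶜ ≤ edist y x := infEdist_le_edist_of_mem hxu
    have h2 : (2:ℝ≥0∞)⁻¹ ^ n ≤ edist y x := le_trans hyG.1 this
    rw [edist_comm] at h2
    exact absurd (lt_of_le_of_lt h2 (lt_trans hxy (ee_lt n (n+2) (by omega))))
      (lt_irrefl _)
  have hHsep : ∀ n (a b : ι), a ≠ b → ∀ x ∈ H n a, ∀ y ∈ H n b,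
      (2:ℝ≥0∞)⁻¹ ^ (n+1) ≤ edist x y := by
    intro n a b hab x hx y hy
    obtain ⟨x', hx'G, hxx'⟩ := infEdist_lt_iff.mp hx
    obtain ⟨y', hy'G, hyy'⟩ := infEdist_lt_iff.mp hy
    have h1 : (2:ℝ≥0∞)⁻¹ ^ n ≤ edist x' y' := hGsep n a b hab x' hx'G y' hy'G
    have h2 : edist x' y' ≤ edist x x' + edist y y' + edist x y := by
      calc edist x' y' ≤ edist x' x + edist x y' := edist_triangle _ _ _
        _ ≤ edist x' x + (edist x y + edist y y') := by
            exact add_le_add le_rfl (edist_triangle x y y')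
        _ = edist x x' + edist y y' + edist x y := by
            rw [edist_comm x' x]; ring
    have h3 : (2:ℝ≥0∞)⁻¹ ^ n ≤ (2:ℝ≥0∞)⁻¹ ^ (n+2) + (2:ℝ≥0∞)⁻¹ ^ (n+2) + edist x y :=
      le_trans h1 (h2.trans (by
        exact add_le_add (add_le_add hxx'.le hyy'.le) le_rfl))
    rw [ee_succ_add (n+1)] at h3
    rw [← ee_succ_add n] at h3
    exact (ENNReal.add_le_add_iff_left (ee_ne_top (n+1))).mp h3
  -- choose clopen C between G and H
  have hex : ∀ n (a : ι), ∃ C : Set Z, IsClopen C ∧ G n a ⊆ C ∧ C ⊆ H n a :=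
    fun n a => hsep _ _ (hGclosed n a) (hHopen n a) (hGH n a)
  choose C hCclopen hGC hCH using hex
  have hCu : ∀ n a, C n a ⊆ u a := fun n a => (hCH n a).trans (hHu n a)
  have hCsep : ∀ n (a b : ι), a ≠ b → ∀ x ∈ C n a, ∀ y ∈ C n b,
      (2:ℝ≥0∞)⁻¹ ^ (n+1) ≤ edist x y := fun n a b hab x hx y hy =>
    hHsep n a b hab x (hCH n a hx) y (hCH n b hy)
  set S : ℕ → Set Z := fun n => ⋃ a, C n a with hS
  have hSclosed : ∀ n, IsClosed (S n) := by
    intro n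
    rw [← isOpen_compl_iff, isOpen_iff_mem_nhds]
    intro x hx
    by_cases hex2 : ∃ a, infEdist x (C n a) < (2:ℝ≥0∞)⁻¹ ^ (n+3)
    · obtain ⟨a, ha⟩ := hex2
      obtain ⟨z, hz, hxz⟩ := infEdist_lt_iff.mp ha
      have hsub : EMetric.ball x ((2:ℝ≥0∞)⁻¹ ^ (n+3)) ∩ (C n a)ᶜ ⊆ (S n)ᶜ := by
        rintro y ⟨hy1, hy2⟩ hyS
        obtain ⟨b, hyb⟩ := mem_iUnion.mp hyS
        have hba : b ≠ a := fun h => hy2 (h ▸ hyb)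
        have : (2:ℝ≥0∞)⁻¹ ^ (n+1) ≤ edist z y :=
          hCsep n a b hba.symm z hz y hyb
        have h4 : edist z y ≤ edist z x + edist x y := edist_triangle _ _ _
        have h5 : edist z x + edist x y < (2:ℝ≥0∞)⁻¹ ^ (n+3) + (2:ℝ≥0∞)⁻¹ ^ (n+3) :=
          ENNReal.add_lt_add (edist_comm z x ▸ hxz) (mem_ball'.mp hy1)
        rw [ee_succ_add (n+2)] at h5
        exact absurd (this.trans (h4.trans h5.le)) (not_le.mpr (ee_lt (n+1) (n+2) (by omega)))
      refine Filter.mem_of_superset ?_ hsub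
      apply IsOpen.mem_nhds (EMetric.isOpen_ball.inter (hCclopen n a).1.isOpen_compl)
      exact ⟨EMetric.mem_ball_self (ee_pos (n+3)), fun hxc => hx (mem_iUnion.mpr ⟨a, hxc⟩)⟩
    · push_neg at hex2
      have hsub : EMetric.ball x ((2:ℝ≥0∞)⁻¹ ^ (n+3)) ⊆ (S n)ᶜ := by
        intro y hy hyS
        obtain ⟨b, hyb⟩ := mem_iUnion.mp hyS
        exact absurd (lt_of_le_of_lt (le_trans (hex2 b) (infEdist_le_edist_of_mem hyb))
          (mem_ball'.mp hy)) (lt_irrefl _)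
      exact Filter.mem_of_superset
        (IsOpen.mem_nhds EMetric.isOpen_ball (EMetric.mem_ball_self (ee_pos (n+3)))) hsub
  refine ⟨fun k => C k.1 k.2 \ ⋃ m ∈ Finset.range k.1, S m, ?_, ?_, ?_, ?_⟩
  · intro k
    exact (hCclopen k.1 k.2).2.sdiff (isClosed_biUnion_finset fun m _ => hSclosed m)
  · rintro ⟨n, a⟩ ⟨m, b⟩ hne
    rw [Function.onFun, Set.disjoint_left]
    rintro x ⟨hx1, hx2⟩ ⟨hy1, hy2⟩
    rcases lt_trichotomy n m with h | h | h
    · exact hy2 (mem_biUnion (Finset.mem_range.mpr h) (mem_iUnion.mpr ⟨a, hx1⟩))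
    · subst h
      have hab : a ≠ b := fun h => hne (by rw [h])
      exact absurd (hCsep n a b hab x hx1 x hy1) (by simp [(ee_pos (n+1)).ne'])
    · exact hx2 (mem_biUnion (Finset.mem_range.mpr h) (mem_iUnion.mpr ⟨b, hy1⟩))
  · rintro ⟨n, a⟩
    exact (diff_subset).trans (hCu n a)
  · apply eq_univ_of_forall
    intro x
    have hxS : ∃ n, x ∈ S n := by
      obtain ⟨n, a, hx⟩ := hGcov x
      exact ⟨n, mem_iUnion.mpr ⟨a, hGC n a hx⟩⟩
    obtain ⟨a, hxa⟩ := mem_iUnion.mp (Nat.find_spec hxS)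
    refine mem_iUnion.mpr ⟨(Nat.find hxS, a), hxa, ?_⟩
    intro hmem
    obtain ⟨m, hm1, hm2⟩ := mem_iUnion₂.mp hmem
    exact Nat.find_min hxS (Finset.mem_range.mp hm1) hm2

/-- Lifting a disjoint open family from a subspace to the ambient metric space. -/
theorem lift_lemma {X : Type*} [MetricSpace X] {Y : Set X} {ι : Type*}
    (g : ι → Set ↥Y) (hgo : ∀ i, IsOpen (g i)) (hgd : Pairwise (Function.onFun Disjoint g))
    (u : ι → Set X) (huo : ∀ i, IsOpen (u i)) (hgu : ∀ i, Subtype.val '' g i ⊆ u i)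
    (hcov : (⋃ i, g i) = univ) :
    ∃ o : ι → Set X, (∀ i, IsOpen (o i)) ∧ Pairwise (Function.onFun Disjoint o) ∧
      (∀ i, o i ⊆ u i) ∧ Y ⊆ ⋃ i, o i := by
  classical
  set A : ι → Set X := fun i => Subtype.val '' g i with hA
  set B : ι → Set X := fun i => Y \ A i with hB
  refine ⟨fun i => u i ∩ {x | infEdist x (A i) < infEdist x (B i)}, ?_, ?_, ?_, ?_⟩
  · exact fun i => (huo i).inter (isOpen_lt continuous_infEdist continuous_infEdist)
  · intro i j hij
    rw [Function.onFun, Set.disjoint_left]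
    rintro x ⟨_, hx1⟩ ⟨_, hx2⟩
    have hAB : ∀ i j, i ≠ j → A j ⊆ B i := by
      intro i j hij z hz
      obtain ⟨w, hw, rfl⟩ := hz
      refine ⟨w.2, ?_⟩
      rintro ⟨w', hw', hww'⟩
      have : w' = w := Subtype.val_injective hww'
      subst this
      exact Set.disjoint_left.mp (hgd hij.symm) hw hw'
    have h1 : infEdist x (A i) < infEdist x (A j) :=
      lt_of_lt_of_le hx1 (infEdist_anti (hAB i j hij))
    have h2 : infEdist x (A j) < infEdist x (A i) :=
      lt_of_lt_of_le hx2 (infEdist_anti (hAB j i hij.symm))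
    exact absurd (h1.trans h2) (lt_irrefl _)
  · exact fun i => inter_subset_left
  · intro y hy
    have : (⟨y, hy⟩ : ↥Y) ∈ ⋃ i, g i := hcov ▸ mem_univ _
    obtain ⟨i, hi⟩ := mem_iUnion.mp this
    have hyA : y ∈ A i := ⟨⟨y, hy⟩, hi, rfl⟩
    refine mem_iUnion.mpr ⟨i, hgu i hyA, ?_⟩
    obtain ⟨O, hOopen, hOg⟩ := isOpen_induced_iff.mp (hgo i)
    have hyO : y ∈ O := by
      have : (⟨y, hy⟩ : ↥Y) ∈ Subtype.val ⁻¹' O := hOg ▸ hi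
      exact this
    have hBO : B i ⊆ Oᶜ := by
      rintro z ⟨hzY, hzA⟩ hzO
      exact hzA ⟨⟨z, hzY⟩, by rw [← hOg]; exact hzO, rfl⟩
    have hpos : 0 < infEdist y Oᶜ := by
      show 0 < Metric.infEDist _ _; rw [infEdist_pos_iff_notMem_closure, hOopen.isClosed_compl.closure_eq]
      simpa using hyO
    calc infEdist y (A i) = 0 := infEdist_zero_of_mem hyA
      _ < infEdist y Oᶜ := hpos
      _ ≤ infEdist y (B i) := infEdist_anti hBO

end Auxiliary

/-- Every countable-dimensional metric space (a countable union of
zero-dimensional subspaces) is a C-space. -/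
theorem countableDimensional_metric_isCSpace (X : Type u) [MetricSpace X]
    (Y : ℕ → Set X) (hcover : (⋃ n, Y n) = Set.univ)
    (hzero : ∀ n, CovDimLE (↥(Y n)) 0) : IsCSpace X := by
  intro U hU
  have key : ∀ n : ℕ, ∃ V : Set (Set X), (∀ s ∈ V, IsOpen s) ∧ V.PairwiseDisjoint id ∧
      Refines V (U n) ∧ Y n ⊆ ⋃₀ V := by
    intro n
    have hsep : ∀ A W : Set ↥(Y n), IsClosed A → IsOpen W → A ⊆ W →
        ∃ C : Set ↥(Y n), IsClopen C ∧ A ⊆ C ∧ C ⊆ W :=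
      fun A W hA hW hAW => clopen_sep (hzero n) hA hW hAW
    set u0 : ↥(U n) → Set ↥(Y n) := fun s => Subtype.val ⁻¹' (s : Set X) with hu0
    have hu0o : ∀ s : ↥(U n), IsOpen (u0 s) := fun s =>
      ((hU n).1 s s.2).preimage continuous_subtype_val
    have hu0cov : ∀ z : ↥(Y n), ∃ s : ↥(U n), z ∈ u0 s := by
      intro z
      have : (z : X) ∈ ⋃₀ U n := (hU n).2 ▸ mem_univ _
      obtain ⟨s, hs, hzs⟩ := this
      exact ⟨⟨s, hs⟩, hzs⟩
    obtain ⟨D, hDo, hDd, hDu, hDcov⟩ := main_construction hsep u0 hu0o hu0cov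
    obtain ⟨o, hoo, hod, hou, hocov⟩ := lift_lemma D hDo hDd
      (fun k => (k.2 : Set X)) (fun k => (hU n).1 _ k.2.2)
      (fun k => by rintro x ⟨z, hz, rfl⟩; exact hDu k hz) hDcov
    refine ⟨Set.range o, ?_, ?_, ?_, ?_⟩
    · rintro s ⟨k, rfl⟩; exact hoo k
    · rintro s ⟨k, rfl⟩ t ⟨k', rfl⟩ hst
      exact hod (fun h => hst (by rw [h]))
    · rintro s ⟨k, rfl⟩; exact ⟨(k.2 : Set X), k.2.2, hou k⟩
    · rw [Set.sUnion_range]; exact hocov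
  choose V hVo hVd hVr hVc using key
  refine ⟨V, fun i => ⟨hVo i, hVd i, hVr i⟩, ?_⟩
  apply eq_univ_of_forall
  intro x
  have : x ∈ ⋃ n, Y n := hcover ▸ mem_univ x
  obtain ⟨n, hn⟩ := mem_iUnion.mp this
  exact mem_iUnion.mpr ⟨n, hVc n hn⟩
end

section
/- A compact Hausdorff space X is a C-space if and only if for every sequence (U_i) of finite open covers of X there exist finitely many families V_1, ..., V_m of pairwise disjoint open sets with V_i refining U_i and V_1 ∪ ... ∪ V_m covering X. -/
open Set TopologicalSpace FirstOrder

universe u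

/-- A compact Hausdorff space is a C-space iff for every sequence of finite
open covers there are finitely many disjoint open families, the `i`-th refining the `i`-th
cover, whose union covers. -/
theorem compact_isCSpace_iff_finite (X : Type u) [TopologicalSpace X] [CompactSpace X]
    [T2Space X] :
    IsCSpace X ↔
      ∀ U : ℕ → Set (Set X), (∀ i, (U i).Finite ∧ IsOpenCover (U i)) →
        ∃ m : ℕ, ∃ V : Fin m → Set (Set X),
          (∀ i : Fin m, (∀ s ∈ V i, IsOpen s) ∧ (V i).PairwiseDisjoint id ∧
            Refines (V i) (U i.val)) ∧
          (⋃ i : Fin m, ⋃₀ (V i)) = Set.univ := by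
  constructor
  · intro hC U hU
    obtain ⟨V, hV, hcov⟩ := hC U (fun i => (hU i).2)
    have hW : ∀ i, IsOpen (⋃₀ (V i)) := fun i => isOpen_sUnion (hV i).1
    have hsub : (Set.univ : Set X) ⊆ ⋃ i, ⋃₀ (V i) := hcov.ge
    obtain ⟨t, ht⟩ := isCompact_univ.elim_finite_subcover (fun i => ⋃₀ (V i)) hW hsub
    refine ⟨t.sup id + 1, fun i => V i.val, fun i => hV i.val, ?_⟩
    apply Set.eq_univ_of_univ_subset
    intro x hx
    obtain ⟨_, ⟨i, rfl⟩, _, ⟨hi, rfl⟩, hxi⟩ := ht hx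
    exact Set.mem_iUnion.2 ⟨⟨i, Nat.lt_succ_of_le (Finset.le_sup (f := id) hi)⟩, hxi⟩
  · intro h U hU
    -- pass to finite subcovers
    have hsc : ∀ i, ∃ t ⊆ U i, t.Finite ∧ ⋃₀ t = Set.univ := by
      intro i
      obtain ⟨t, htU, htf, htc⟩ := isCompact_univ.elim_finite_subcover_image
        (fun s hs => (hU i).1 s hs) (by rw [← Set.sUnion_eq_biUnion, (hU i).2])
      exact ⟨t, htU, htf, Set.eq_univ_of_univ_subset
        (by rwa [Set.sUnion_eq_biUnion])⟩
    choose T hTU hTf hTc using hsc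
    have hT : ∀ i, (T i).Finite ∧ IsOpenCover (T i) := fun i =>
      ⟨hTf i, fun s hs => (hU i).1 s (hTU i hs), hTc i⟩
    obtain ⟨m, V, hV, hcov⟩ := h T hT
    refine ⟨fun i => if h : i < m then V ⟨i, h⟩ else ∅, ?_, ?_⟩
    · intro i
      by_cases hi : i < m
      · simp only [dif_pos hi]
        refine ⟨(hV ⟨i, hi⟩).1, (hV ⟨i, hi⟩).2.1, ?_⟩
        intro v hv
        obtain ⟨u, hu, hvu⟩ := (hV ⟨i, hi⟩).2.2 v hv
        exact ⟨u, hTU i hu, hvu⟩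
      · simp [dif_neg hi, Refines, Set.PairwiseDisjoint, Set.Pairwise]
    · apply Set.eq_univ_of_univ_subset
      intro x hx
      have := hcov.ge hx
      obtain ⟨_, ⟨i, rfl⟩, hxi⟩ := this
      exact Set.mem_iUnion.2 ⟨i.val, by simpa [i.isLt] using hxi⟩
end

section
/- Let X be a compact Hausdorff space and F a base for closed sets of X that is closed under finite unions and finite intersections (so F is a bounded distributive lattice under union and intersection). Then the map h : X → wF, h(x) = {F ∈ F : x ∈ F}, is a well-defined homeomorphism onto the Wallman space wF of lattice ultrafilters on F. -/
open Set TopologicalSpace FirstOrder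

universe u v

/-- An ultrafilter on a lattice `F` of subsets of `α` (in the Wallman sense): a proper filter
on `F` such that every member of `F` meeting all members of the filter belongs to it. -/
structure LUltra {α : Type u} (F : Set (Set α)) where
  sets : Set (Set α)
  sets_subset : sets ⊆ F
  univ_mem : Set.univ ∈ sets
  empty_notMem : ∅ ∉ sets
  inter_mem : ∀ a ∈ sets, ∀ b ∈ sets, a ∩ b ∈ sets
  superset_mem : ∀ a ∈ sets, ∀ b ∈ F, a ⊆ b → b ∈ sets
  ultra : ∀ a ∈ F, a ∉ sets → ∃ b ∈ sets, a ∩ b = ∅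

/-- The Wallman topology: the sets `â = {u : a ∈ u}`, `a ∈ F`, form a base for closed sets. -/
instance LUltra.instTopologicalSpace {α : Type u} (F : Set (Set α)) :
    TopologicalSpace (LUltra F) :=
  TopologicalSpace.generateFrom {s | ∃ a ∈ F, s = {u : LUltra F | a ∈ u.sets}ᶜ}

theorem LUltra.myext {α : Type u} {F : Set (Set α)} {u v : LUltra F}
    (h : u.sets = v.sets) : u = v := by
  cases u; cases v; cases h; rfl

/-- If `F` is a base for the closed sets of a compact Hausdorff space `X`
closed under finite unions and intersections (a bounded lattice of closed sets), then
`h : x ↦ {F ∈ F : x ∈ F}` is a homeomorphism of `X` onto the Wallman space `wF`. -/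
theorem wallman_of_closed_base (X : Type u) [TopologicalSpace X] [CompactSpace X]
    [T2Space X] (F : Set (Set X))
    (hclosed : ∀ s ∈ F, IsClosed s)
    (hbase : ∀ C : Set X, IsClosed C → ∃ S ⊆ F, C = ⋂₀ S)
    (hempty : ∅ ∈ F) (huniv : Set.univ ∈ F)
    (hunion : ∀ a ∈ F, ∀ b ∈ F, a ∪ b ∈ F)
    (hinter : ∀ a ∈ F, ∀ b ∈ F, a ∩ b ∈ F) :
    ∃ h : X ≃ₜ LUltra F, ∀ x : X, (h x).sets = {s ∈ F | x ∈ s} := by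
  classical
  -- finite intersections of members of F are in F
  have hFinter : ∀ (t : Finset (Set X)), ↑t ⊆ F → (⋂ s ∈ t, s) ∈ F := by
    intro t
    induction t using Finset.induction_on with
    | empty => intro _; simpa using huniv
    | @insert a t ha ih =>
      intro hsub
      rw [Finset.set_biInter_insert]
      exact hinter _ (hsub (Finset.mem_insert_self _ _)) _
        (ih (fun s hs => hsub (Finset.mem_insert_of_mem hs)))
  -- key separation lemma
  have key : ∀ C : Set X, IsClosed C → ∀ x, x ∉ C → ∃ b ∈ F, x ∈ b ∧ b ∩ C = ∅ := by
    intro C hC x hx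
    obtain ⟨S, hSF, hxS⟩ := hbase {x} isClosed_singleton
    have hxmem : ∀ s ∈ S, x ∈ s := by
      intro s hs
      have : x ∈ ⋂₀ S := by rw [← hxS]; exact rfl
      exact this s hs
    have hdisj : (C ∩ ⋂ s : S, (s : Set X)) = ∅ := by
      rw [← sInter_eq_iInter, ← hxS]
      ext y
      simp only [mem_inter_iff, mem_singleton_iff, mem_empty_iff_false, iff_false]
      rintro ⟨hyC, rfl⟩
      exact hx hyC
    obtain ⟨t, ht⟩ := hC.isCompact.elim_finite_subfamily_closed _
      (fun s : S => hclosed s (hSF s.2)) hdisj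
    refine ⟨⋂ s ∈ t.image (fun i : S => (i : Set X)), s,
      hFinter _ ?_, ?_, ?_⟩
    · intro s hs
      simp only [Finset.coe_image, mem_image] at hs
      obtain ⟨i, _, rfl⟩ := hs
      exact hSF i.2
    · simp only [mem_iInter, Finset.mem_image]
      rintro s ⟨i, _, rfl⟩
      exact hxmem i i.2
    · have heq : (⋂ s ∈ t.image (fun i : S => (i : Set X)), s) = ⋂ i ∈ t, (i : Set X) := by
        ext y
        simp only [mem_iInter, Finset.mem_image]
        constructor
        · intro h i hi; exact h _ ⟨i, hi, rfl⟩
        · rintro h s ⟨i, hi, rfl⟩; exact h i hi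
      rw [heq, inter_comm]
      exact ht
  -- the map
  let hfun : X → LUltra F := fun x =>
    { sets := {s | s ∈ F ∧ x ∈ s}
      sets_subset := fun s hs => hs.1
      univ_mem := ⟨huniv, mem_univ x⟩
      empty_notMem := fun h => h.2
      inter_mem := fun a ha b hb => ⟨hinter a ha.1 b hb.1, ha.2, hb.2⟩
      superset_mem := fun a ha b hbF hab => ⟨hbF, hab ha.2⟩
      ultra := by
        intro a haF ha
        have hx : x ∉ a := fun hxa => ha ⟨haF, hxa⟩
        obtain ⟨b, hbF, hxb, hba⟩ := key a (hclosed a haF) x hx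
        exact ⟨b, ⟨hbF, hxb⟩, by rw [inter_comm]; exact hba⟩ }
  have hfun_sets : ∀ x s, s ∈ (hfun x).sets ↔ s ∈ F ∧ x ∈ s := fun x s => Iff.rfl
  have hinj : Function.Injective hfun := by
    intro x y hxy
    by_contra hne
    obtain ⟨b, hbF, hxb, hb⟩ := key {y} isClosed_singleton x (by simpa using hne)
    have hmem : b ∈ (hfun x).sets := ⟨hbF, hxb⟩
    rw [hxy] at hmem
    have : y ∈ b ∩ {y} := ⟨hmem.2, rfl⟩
    rw [hb] at this
    exact this
  have hsur : Function.Surjective hfun := by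
    intro u
    have hne : (⋂₀ u.sets).Nonempty := by
      by_contra h
      rw [Set.not_nonempty_iff_eq_empty] at h
      have hdisj : (Set.univ ∩ ⋂ s : u.sets, (s : Set X)) = ∅ := by
        rw [Set.univ_inter, ← sInter_eq_iInter, h]
      obtain ⟨t, ht⟩ := isCompact_univ.elim_finite_subfamily_closed _
        (fun s : u.sets => hclosed s (u.sets_subset s.2)) hdisj
      rw [Set.univ_inter] at ht
      have hmem : (⋂ i ∈ t, (i : Set X)) ∈ u.sets := by
        clear ht
        induction t using Finset.induction_on with
        | empty => simpa using u.univ_mem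
        | @insert a s ha ih =>
          rw [Finset.set_biInter_insert]
          exact u.inter_mem _ a.2 _ ih
      rw [ht] at hmem
      exact u.empty_notMem hmem
    obtain ⟨x, hx⟩ := hne
    refine ⟨x, LUltra.myext ?_⟩
    ext s
    rw [hfun_sets]
    constructor
    · rintro ⟨hsF, hxs⟩
      by_contra hs
      obtain ⟨b, hbu, hsb⟩ := u.ultra s hsF hs
      have hxb : x ∈ b := hx b hbu
      have : x ∈ s ∩ b := ⟨hxs, hxb⟩
      rw [hsb] at this
      exact this
    · intro hs
      exact ⟨u.sets_subset hs, hx s hs⟩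
  have hbij : Function.Bijective hfun := ⟨hinj, hsur⟩
  have hcont : Continuous hfun := by
    rw [continuous_generateFrom_iff]
    rintro s ⟨a, haF, rfl⟩
    have hpre : hfun ⁻¹' {u : LUltra F | a ∈ u.sets}ᶜ = aᶜ := by
      ext x
      simp only [mem_preimage, mem_compl_iff, mem_setOf_eq, hfun_sets]
      tauto
    rw [hpre]
    exact (hclosed a haF).isOpen_compl
  have hclosedhat : ∀ a ∈ F, IsClosed {u : LUltra F | a ∈ u.sets} := by
    intro a haF
    rw [← isOpen_compl_iff]
    exact TopologicalSpace.GenerateOpen.basic _ ⟨a, haF, rfl⟩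
  have hclosedmap : IsClosedMap hfun := by
    intro C hC
    obtain ⟨S, hSF, rfl⟩ := hbase C hC
    have himg : hfun '' ⋂₀ S = ⋂ s ∈ S, {u : LUltra F | s ∈ u.sets} := by
      ext u
      constructor
      · rintro ⟨x, hx, rfl⟩
        simp only [mem_iInter, mem_setOf_eq]
        intro s hs
        exact ⟨hSF hs, hx s hs⟩
      · intro hu
        obtain ⟨x, rfl⟩ := hsur u
        refine ⟨x, ?_, rfl⟩
        intro s hs
        have := mem_iInter₂.mp hu s hs
        exact ((hfun_sets x s).mp this).2
    rw [himg]
    exact isClosed_biInter fun s hs => hclosedhat s (hSF hs)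
  have hopen : IsOpenMap hfun := by
    intro U hU
    have : hfun '' U = (hfun '' Uᶜ)ᶜ := by
      rw [Set.image_compl_eq hbij, compl_compl]
    rw [this]
    exact (hclosedmap _ hU.isClosed_compl).isOpen_compl
  exact ⟨Equiv.toHomeomorphOfContinuousOpen (Equiv.ofBijective hfun hbij) hcont hopen,
    fun x => rfl⟩
end

section
/- A bounded distributive separative lattice L is normal (for all a, b with a ∧ b = 0 there exist c, d with c ∨ d = 1, c ∧ a = 0, d ∧ b = 0) if and only if its Wallman space wL is Hausdorff. -/
open Set TopologicalSpace FirstOrder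

universe u v

/-- An ultrafilter on an abstract bounded lattice `L` (in the Wallman sense). -/
structure LatUltra (L : Type u) [Lattice L] [BoundedOrder L] where
  sets : Set L
  top_mem : ⊤ ∈ sets
  bot_notMem : ⊥ ∉ sets
  inf_mem : ∀ a ∈ sets, ∀ b ∈ sets, a ⊓ b ∈ sets
  superset_mem : ∀ a ∈ sets, ∀ b : L, a ≤ b → b ∈ sets
  ultra : ∀ a : L, a ∉ sets → ∃ b ∈ sets, a ⊓ b = ⊥

/-- The Wallman topology on the space of lattice ultrafilters: the sets `â = {u : a ∈ u}`
form a base for closed sets. -/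
instance LatUltra.instTopologicalSpace (L : Type u) [Lattice L] [BoundedOrder L] :
    TopologicalSpace (LatUltra L) :=
  TopologicalSpace.generateFrom {s | ∃ a : L, s = {u : LatUltra L | a ∈ u.sets}ᶜ}

/-- A lattice is normal. -/
def LatNormal (L : Type u) [Lattice L] [BoundedOrder L] : Prop :=
  ∀ a b : L, a ⊓ b = ⊥ → ∃ c d : L, c ⊔ d = ⊤ ∧ c ⊓ a = ⊥ ∧ d ⊓ b = ⊥

/-- A lattice is separative: whenever `a ≰ b` there is `c` with `c ⊓ a ≠ ⊥` and `c ⊓ b = ⊥`. -/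
def LatSeparative (L : Type u) [Lattice L] [BoundedOrder L] : Prop :=
  ∀ a b : L, ¬ a ≤ b → ∃ c : L, c ⊓ a ≠ ⊥ ∧ c ⊓ b = ⊥

section Aux

variable {L : Type u} [DistribLattice L] [BoundedOrder L]

namespace LatUltra

lemma not_le_bot (w : LatUltra L) {x : L} (hx : x ∈ w.sets) (h : x ≤ ⊥) : False :=
  w.bot_notMem (w.superset_mem x hx ⊥ h)

lemma sup_notMem (w : LatUltra L) {c d : L} (hc : c ∉ w.sets) (hd : d ∉ w.sets) :
    c ⊔ d ∉ w.sets := by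
  obtain ⟨e, he, hce⟩ := w.ultra c hc
  obtain ⟨f, hf, hdf⟩ := w.ultra d hd
  intro h
  have hmem := w.inf_mem _ h _ (w.inf_mem e he f hf)
  refine w.not_le_bot hmem ?_
  calc (c ⊔ d) ⊓ (e ⊓ f) = c ⊓ (e ⊓ f) ⊔ d ⊓ (e ⊓ f) := inf_sup_right _ _ _
    _ ≤ (c ⊓ e) ⊔ (d ⊓ f) := by gcongr <;> simp
    _ ≤ ⊥ := by rw [hce, hdf]; simp

end LatUltra

/-- A (proper) filter on a bounded lattice. -/
def IsLatFilter (F : Set L) : Prop :=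
  ⊤ ∈ F ∧ ⊥ ∉ F ∧ (∀ a ∈ F, ∀ b ∈ F, a ⊓ b ∈ F) ∧ (∀ a ∈ F, ∀ b : L, a ≤ b → b ∈ F)

/-- Every proper filter extends to a lattice ultrafilter. -/
lemma exists_latUltra (F : Set L) (hF : IsLatFilter F) :
    ∃ w : LatUltra L, F ⊆ w.sets := by
  obtain ⟨M, hFM, hmax⟩ : ∃ m, F ⊆ m ∧ Maximal (fun G => IsLatFilter G ∧ F ⊆ G) m := by
    have h := zorn_subset_nonempty {G : Set L | IsLatFilter G ∧ F ⊆ G} ?_ F ⟨hF, subset_rfl⟩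
    · obtain ⟨m, hm, hmax⟩ := h
      exact ⟨m, hm, hmax⟩
    · intro c hc hchain ⟨G0, hG0⟩
      refine ⟨⋃₀ c, ⟨⟨?_, ?_, ?_, ?_⟩, ?_⟩, fun s hs => Set.subset_sUnion_of_mem hs⟩
      · exact ⟨G0, hG0, (hc hG0).1.1⟩
      · rintro ⟨G, hG, hbot⟩
        exact (hc hG).1.2.1 hbot
      · rintro a ⟨G1, hG1, ha⟩ b ⟨G2, hG2, hb⟩
        rcases hchain.total hG1 hG2 with h | h
        · exact ⟨G2, hG2, (hc hG2).1.2.2.1 a (h ha) b hb⟩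
        · exact ⟨G1, hG1, (hc hG1).1.2.2.1 a ha b (h hb)⟩
      · rintro a ⟨G, hG, ha⟩ b hab
        exact ⟨G, hG, (hc hG).1.2.2.2 a ha b hab⟩
      · exact (hc hG0).2.trans (Set.subset_sUnion_of_mem hG0)
  have hult : ∀ a : L, a ∉ M → ∃ b ∈ M, a ⊓ b = ⊥ := by
    intro a ha
    by_contra hcon
    push_neg at hcon
    set M' : Set L := {x | ∃ b ∈ M, a ⊓ b ≤ x} with hM'
    have hMM' : M ⊆ M' := fun b hb => ⟨b, hb, inf_le_right⟩
    have haM' : a ∈ M' := ⟨⊤, hmax.prop.1.1, by simp⟩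
    have hM'filter : IsLatFilter M' := by
      refine ⟨hMM' hmax.prop.1.1, ?_, ?_, ?_⟩
      · rintro ⟨b, hb, hab⟩
        exact hcon b hb (le_bot_iff.mp hab)
      · rintro x ⟨b1, hb1, h1⟩ y ⟨b2, hb2, h2⟩
        exact ⟨b1 ⊓ b2, hmax.prop.1.2.2.1 b1 hb1 b2 hb2,
          le_inf (le_trans (inf_le_inf_left _ inf_le_left) h1)
            (le_trans (inf_le_inf_left _ inf_le_right) h2)⟩
      · rintro x ⟨b, hb, hxb⟩ y hxy
        exact ⟨b, hb, hxb.trans hxy⟩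
    have : M' ⊆ M := hmax.2 ⟨hM'filter, hFM.trans hMM'⟩ hMM'
    exact ha (this haM')
  exact ⟨⟨M, hmax.prop.1.1, hmax.prop.1.2.1, hmax.prop.1.2.2.1, hmax.prop.1.2.2.2, hult⟩, hFM⟩

/-- Every open set in the Wallman topology contains a basic open set around each of
its points. -/
lemma generateOpen_basic {U : Set (LatUltra L)}
    (hU : TopologicalSpace.GenerateOpen
      {s | ∃ a : L, s = {u : LatUltra L | a ∈ u.sets}ᶜ} U) :
    ∀ u ∈ U, ∃ c : L, c ∉ u.sets ∧ {w : LatUltra L | c ∈ w.sets}ᶜ ⊆ U := by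
  induction hU with
  | basic s hs =>
      rintro u hu
      obtain ⟨a, rfl⟩ := hs
      exact ⟨a, hu, subset_rfl⟩
  | univ =>
      intro u _
      exact ⟨⊥, u.bot_notMem, by simp⟩
  | inter s t hs ht ihs iht =>
      rintro u ⟨hus, hut⟩
      obtain ⟨c, hc, hcs⟩ := ihs u hus
      obtain ⟨d, hd, hdt⟩ := iht u hut
      refine ⟨c ⊔ d, u.sup_notMem hc hd, fun w hw => ⟨hcs ?_, hdt ?_⟩⟩
      · intro hcw; exact hw (w.superset_mem c hcw _ le_sup_left)
      · intro hdw; exact hw (w.superset_mem d hdw _ le_sup_right)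
  | sUnion S hS ih =>
      rintro u ⟨s, hs, hus⟩
      obtain ⟨c, hc, hcs⟩ := ih s hs u hus
      exact ⟨c, hc, hcs.trans (Set.subset_sUnion_of_mem hs)⟩

/-- If every ultrafilter contains `c` or `d`, then `c ⊔ d = ⊤` (using separativity). -/
lemma cover_top (hsep : LatSeparative L) {c d : L}
    (h : ∀ w : LatUltra L, c ∈ w.sets ∨ d ∈ w.sets) : c ⊔ d = ⊤ := by
  by_contra hne
  obtain ⟨e, he1, he2⟩ := hsep ⊤ (c ⊔ d) (fun hle => hne (top_le_iff.mp hle))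
  rw [inf_top_eq] at he1
  obtain ⟨w, hw⟩ := exists_latUltra {x | e ≤ x}
    ⟨le_top, fun hb => he1 (le_bot_iff.mp hb),
      fun a ha b hb => le_inf ha hb, fun a ha b hab => le_trans ha hab⟩
  have hew : e ∈ w.sets := hw (le_refl e)
  rcases h w with hcw | hdw
  · refine w.not_le_bot (w.inf_mem e hew c hcw) ?_
    calc e ⊓ c ≤ e ⊓ (c ⊔ d) := inf_le_inf_left _ le_sup_left
      _ = ⊥ := he2
  · refine w.not_le_bot (w.inf_mem e hew d hdw) ?_
    calc e ⊓ d ≤ e ⊓ (c ⊔ d) := inf_le_inf_left _ le_sup_right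
      _ = ⊥ := he2

/-- The compactness-style argument: if every ultrafilter containing `a` misses some `c i`,
then finitely many `c i` already meet `a` to `⊥`. -/
lemma finite_meet {ι : Type v} (a : L) (c : ι → L)
    (h : ∀ w : LatUltra L, a ∈ w.sets → ∃ i, c i ∉ w.sets) :
    ∃ s : Finset ι, a ⊓ s.inf c = ⊥ := by
  classical
  by_contra hcon
  push_neg at hcon
  have hF : IsLatFilter {x : L | ∃ s : Finset ι, a ⊓ s.inf c ≤ x} := by
    refine ⟨⟨∅, le_top⟩, ?_, ?_, ?_⟩
    · rintro ⟨s, hs⟩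
      exact hcon s (le_bot_iff.mp hs)
    · rintro x ⟨s, hsx⟩ y ⟨t, hty⟩
      refine ⟨s ∪ t, le_inf (le_trans ?_ hsx) (le_trans ?_ hty)⟩
      · exact inf_le_inf_left _ (Finset.inf_mono Finset.subset_union_left)
      · exact inf_le_inf_left _ (Finset.inf_mono Finset.subset_union_right)
    · rintro x ⟨s, hsx⟩ y hxy
      exact ⟨s, hsx.trans hxy⟩
  obtain ⟨w, hw⟩ := exists_latUltra _ hF
  have haw : a ∈ w.sets := hw ⟨∅, by simp⟩
  obtain ⟨i, hi⟩ := h w haw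
  exact hi (hw ⟨{i}, by simp⟩)

lemma finset_sup_notMem (w : LatUltra L) {ι : Type v} (s : Finset ι) (f : ι → L)
    (h : ∀ i ∈ s, f i ∉ w.sets) : s.sup f ∉ w.sets := by
  induction s using Finset.cons_induction with
  | empty => simpa using w.bot_notMem
  | cons i s hi ih =>
      rw [Finset.sup_cons]
      exact w.sup_notMem (h i (Finset.mem_cons_self i s))
        (ih fun j hj => h j (Finset.mem_cons_of_mem hj))

lemma finset_inf_sup_top {ι : Type v} {D : L} (s : Finset ι) (c : ι → L)
    (h : ∀ i ∈ s, c i ⊔ D = ⊤) : s.inf c ⊔ D = ⊤ := by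
  induction s using Finset.cons_induction with
  | empty => simp
  | cons i s hi ih =>
      rw [Finset.inf_cons, sup_inf_right, h i (Finset.mem_cons_self i s),
        ih fun j hj => h j (Finset.mem_cons_of_mem hj), inf_top_eq]

lemma finset_sup_inf_bot {ι : Type v} {a : L} (t : Finset ι) (C : ι → L)
    (h : ∀ j ∈ t, C j ⊓ a = ⊥) : t.sup C ⊓ a = ⊥ := by
  induction t using Finset.cons_induction with
  | empty => simp
  | cons i t hi ih =>
      rw [Finset.sup_cons, inf_sup_right, h i (Finset.mem_cons_self i t),
        ih fun j hj => h j (Finset.mem_cons_of_mem hj), sup_bot_eq]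

/-- Separation of distinct points in the Wallman space of a normal lattice. -/
lemma sep_of_normal (hnorm : LatNormal L) {u vv : LatUltra L} {a : L}
    (hau : a ∈ u.sets) (hav : a ∉ vv.sets) :
    ∃ U V : Set (LatUltra L), IsOpen U ∧ IsOpen V ∧ u ∈ U ∧ vv ∈ V ∧ Disjoint U V := by
  obtain ⟨b, hbv, hab⟩ := vv.ultra a hav
  obtain ⟨c, d, hcd, hca, hdb⟩ := hnorm a b hab
  refine ⟨{w : LatUltra L | c ∈ w.sets}ᶜ, {w : LatUltra L | d ∈ w.sets}ᶜ,
    TopologicalSpace.GenerateOpen.basic _ ⟨c, rfl⟩,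
    TopologicalSpace.GenerateOpen.basic _ ⟨d, rfl⟩, ?_, ?_, ?_⟩
  · intro h
    exact u.not_le_bot (u.inf_mem c h a hau) hca.le
  · intro h
    exact vv.not_le_bot (vv.inf_mem d h b hbv) hdb.le
  · rw [Set.disjoint_left]
    intro w hcw hdw
    have := w.sup_notMem hcw hdw
    rw [hcd] at this
    exact this w.top_mem

end Aux

/-- A bounded distributive separative lattice is normal iff its Wallman space
is Hausdorff. -/
theorem latNormal_iff_t2 (L : Type u) [DistribLattice L] [BoundedOrder L]
    (hsep : LatSeparative L) :
    LatNormal L ↔ T2Space (LatUltra L) := by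
  constructor
  · -- normal → Hausdorff
    intro hnorm
    constructor
    intro x y hxy
    have hne : x.sets ≠ y.sets := by
      intro h
      apply hxy
      cases x; cases y
      simpa using h
    have hdiff : ∃ a : L, (a ∈ x.sets ∧ a ∉ y.sets) ∨ (a ∈ y.sets ∧ a ∉ x.sets) := by
      by_contra hc
      push_neg at hc
      refine hne (Set.eq_of_subset_of_subset (fun a ha => ?_) (fun a ha => ?_))
      · exact (hc a).1 ha
      · exact (hc a).2 ha
    obtain ⟨a, ⟨h1, h2⟩ | ⟨h1, h2⟩⟩ := hdiff
    · exact sep_of_normal hnorm h1 h2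
    · obtain ⟨U, V, hU, hV, hyU, hxV, hdisj⟩ := sep_of_normal hnorm h1 h2
      exact ⟨V, U, hV, hU, hxV, hyU, hdisj.symm⟩
  · -- Hausdorff → normal
    intro hT2 a b hab
    have hpair : ∀ u v : LatUltra L, u ≠ v →
        ∃ c d : L, c ⊔ d = ⊤ ∧ c ∉ u.sets ∧ d ∉ v.sets := by
      intro u v huv
      obtain ⟨U, V, hUo, hVo, hu, hv, hdisj⟩ := t2_separation huv
      obtain ⟨c, hc, hcU⟩ := generateOpen_basic hUo u hu
      obtain ⟨d, hd, hdV⟩ := generateOpen_basic hVo v hv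
      refine ⟨c, d, cover_top hsep ?_, hc, hd⟩
      intro w
      by_contra hw
      push_neg at hw
      exact Set.disjoint_left.mp hdisj (hcU hw.1) (hdV hw.2)
    have hstep : ∀ v : {v : LatUltra L // b ∈ v.sets},
        ∃ C D : L, C ⊓ a = ⊥ ∧ C ⊔ D = ⊤ ∧ D ∉ v.1.sets := by
      rintro ⟨v, hbv⟩
      have hchoice : ∀ u : {u : LatUltra L // a ∈ u.sets},
          ∃ c d : L, c ⊔ d = ⊤ ∧ c ∉ u.1.sets ∧ d ∉ v.sets := by
        rintro ⟨u, hu⟩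
        refine hpair u v ?_
        rintro rfl
        exact u.not_le_bot (u.inf_mem a hu b hbv) hab.le
      choose c d hcd hcu hdv using hchoice
      obtain ⟨s, hs⟩ := finite_meet a c (fun w hw => ⟨⟨w, hw⟩, hcu ⟨w, hw⟩⟩)
      refine ⟨s.inf c, s.sup d, by rw [inf_comm]; exact hs, ?_, ?_⟩
      · exact finset_inf_sup_top s c (fun i hi =>
          eq_top_iff.mpr ((hcd i).ge.trans (sup_le_sup_left (Finset.le_sup hi) _)))
      · exact finset_sup_notMem v s d (fun i _ => hdv i)
    choose C D hCa hCD hDv using hstep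
    obtain ⟨t, ht⟩ := finite_meet b D (fun w hw => ⟨⟨w, hw⟩, hDv ⟨w, hw⟩⟩)
    refine ⟨t.sup C, t.inf D, ?_, ?_, by rw [inf_comm]; exact ht⟩
    · rw [sup_comm]
      exact finset_inf_sup_top t D (fun j hj =>
        eq_top_iff.mpr ((hCD j).ge.trans
          (sup_le ((Finset.le_sup hj).trans le_sup_right) le_sup_left)))
    · exact finset_sup_inf_bot t C (fun j _ => hCa j)
end

section
/- Let X be a Hausdorff continuum, κ a sufficiently large regular cardinal with X ∈ H(κ), and M ≺ H(κ) a countable elementary submodel with X ∈ M. Then L = 2^X ∩ M is a countable normal sublattice of the lattice of closed subsets of X, and its Wallman space wL is a metrizable continuum. -/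
open Set TopologicalSpace FirstOrder

universe u v

/-- `x ∈ H(κ)`: `x` hereditarily has cardinality `< κ` (for regular `κ` this agrees with
`|TC(x)| < κ`). -/
def HeredLt (κ : Cardinal.{1}) (x : ZFSet.{0}) : Prop :=
  ZFSet.mem_wf.fix (fun x ih => Cardinal.mk x.toSet < κ ∧ ∀ y, ∀ h : y ∈ x, ih y h) x

/-- `ZFSet` as a structure for the language with one binary relation, interpreted as `∈`. -/
instance ZFSet.memLangStructure : FirstOrder.Language.graph.Structure ZFSet.{0} where
  funMap := fun {_} f => isEmptyElim f
  RelMap := fun {_} r => match r with | .adj => fun x => x 0 ∈ x 1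

/-- `H(κ)` as a substructure of the universe of sets with membership. -/
def HKappa (κ : Cardinal.{1}) : FirstOrder.Language.graph.Substructure ZFSet.{0} where
  carrier := {x | HeredLt κ x}
  fun_mem := fun {_} f => isEmptyElim f

/-- `z` belongs to the elementary submodel `M ≺ H(κ)`. -/
def MemOf (κ : Cardinal.{1})
    (M : FirstOrder.Language.graph.ElementarySubstructure (HKappa κ))
    (z : ZFSet.{0}) : Prop :=
  ∃ h : z ∈ HKappa κ, (⟨z, h⟩ : HKappa κ) ∈ M

/-- The ZF-set coding a subset `A` of (the extension of) the ZF-set `X`. -/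
noncomputable def codeSet (X : ZFSet.{0}) (A : Set ↥X.toSet) : ZFSet.{0} :=
  ZFSet.sep (fun y => ∃ h : y ∈ X.toSet, (⟨y, h⟩ : ↥X.toSet) ∈ A) X

/-- The subset of `X` decoded from a ZF-set `t`. -/
def decodeSet (X : ZFSet.{0}) (t : ZFSet.{0}) : Set ↥X.toSet :=
  {p : ↥X.toSet | (p : ZFSet) ∈ t}

/-- The ZF-set coding the topology of the space `X`: the set of codes of open subsets. -/
noncomputable def opensZ (X : ZFSet.{0}) [TopologicalSpace ↥X.toSet] : ZFSet.{0} :=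
  ZFSet.sep (fun t => IsOpen (decodeSet X t)) X.powerset

/-- The lattice `L = 2^X ∩ M`: the closed subsets of `X` whose codes belong to `M`. -/
def Lfam (X : ZFSet.{0}) [TopologicalSpace ↥X.toSet] (κ : Cardinal.{1})
    (M : FirstOrder.Language.graph.ElementarySubstructure (HKappa κ)) :
    Set (Set ↥X.toSet) :=
  {A | IsClosed A ∧ MemOf κ M (codeSet X A)}


/-! ### Auxiliary: Wallman space theory -/

namespace Wallman

variable {α : Type u} {F : Set (Set α)}

/-- The basic closed set. -/
def hat (F : Set (Set α)) (a : Set α) : Set (LUltra F) := {u | a ∈ u.sets}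

lemma lultra_ext {u v : LUltra F} (h : u.sets = v.sets) : u = v := by
  cases u; cases v; simpa using h

variable (hempty : ∅ ∈ F) (huniv : Set.univ ∈ F)
  (hU : ∀ a ∈ F, ∀ b ∈ F, a ∪ b ∈ F) (hI : ∀ a ∈ F, ∀ b ∈ F, a ∩ b ∈ F)

lemma hat_univ : hat F Set.univ = Set.univ := by
  ext u; simp [hat, u.univ_mem]

lemma hat_empty : hat F ∅ = ∅ := by
  ext u; simp [hat, u.empty_notMem]

lemma hat_inter {a b : Set α} (ha : a ∈ F) (hb : b ∈ F) :
    hat F (a ∩ b) = hat F a ∩ hat F b := by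
  ext u
  constructor
  · intro h
    exact ⟨u.superset_mem _ h a ha inter_subset_left,
      u.superset_mem _ h b hb inter_subset_right⟩
  · rintro ⟨h1, h2⟩
    exact u.inter_mem a h1 b h2

include hU in
lemma hat_union {a b : Set α} (ha : a ∈ F) (hb : b ∈ F) :
    hat F (a ∪ b) = hat F a ∪ hat F b := by
  have hab : a ∪ b ∈ F := hU a ha b hb
  ext u
  constructor
  · intro h
    by_contra hcon
    have h1 : a ∉ u.sets := fun h => hcon (Or.inl h)
    have h2 : b ∉ u.sets := fun h => hcon (Or.inr h)
    obtain ⟨c, hc, hca⟩ := u.ultra a ha h1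
    obtain ⟨d, hd, hdb⟩ := u.ultra b hb h2
    have : (a ∪ b) ∩ (c ∩ d) ∈ u.sets :=
      u.inter_mem _ h _ (u.inter_mem c hc d hd)
    have he : (a ∪ b) ∩ (c ∩ d) = ∅ := by
      rw [union_inter_distrib_right]
      rw [eq_empty_iff_forall_notMem]
      intro x hx
      rcases hx with hx | hx
      · exact (eq_empty_iff_forall_notMem.1 hca x) ⟨hx.1, hx.2.1⟩
      · exact (eq_empty_iff_forall_notMem.1 hdb x) ⟨hx.1, hx.2.2⟩
    rw [he] at this
    exact u.empty_notMem this
  · rintro (h | h)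
    · exact u.superset_mem a h _ hab subset_union_left
    · exact u.superset_mem b h _ hab subset_union_right

/-- `hat a` is closed. -/
lemma isClosed_hat {a : Set α} (ha : a ∈ F) : IsClosed (hat F a) := by
  rw [← isOpen_compl_iff]
  exact TopologicalSpace.GenerateOpen.basic _ ⟨a, ha, rfl⟩

/-- L-filters. -/
def IsLF (F G : Set (Set α)) : Prop :=
  G ⊆ F ∧ Set.univ ∈ G ∧ ∅ ∉ G ∧ (∀ a ∈ G, ∀ b ∈ G, a ∩ b ∈ G) ∧
    (∀ a ∈ G, ∀ b ∈ F, a ⊆ b → b ∈ G)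

include huniv hI in
lemma exists_ultra {G : Set (Set α)} (hG : IsLF F G) : ∃ u : LUltra F, G ⊆ u.sets := by
  obtain ⟨H, hGH, hmax⟩ := zorn_subset_nonempty {H | IsLF F H ∧ G ⊆ H}
    (fun c hc hchain hcne => by
      obtain ⟨H₀, hH₀⟩ := hcne
      refine ⟨⋃₀ c, ⟨⟨?_, ?_, ?_, ?_, ?_⟩, ?_⟩, fun H hH => subset_sUnion_of_mem hH⟩
      · exact fun x hx => by
          obtain ⟨H, hH, hxH⟩ := hx
          exact (hc hH).1.1 hxH
      · exact ⟨H₀, hH₀, (hc hH₀).1.2.1⟩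
      · rintro ⟨H, hH, hxH⟩
        exact (hc hH).1.2.2.1 hxH
      · rintro a ⟨H₁, hH₁, ha⟩ b ⟨H₂, hH₂, hb⟩
        rcases hchain.total hH₁ hH₂ with h | h
        · exact ⟨H₂, hH₂, (hc hH₂).1.2.2.2.1 a (h ha) b hb⟩
        · exact ⟨H₁, hH₁, (hc hH₁).1.2.2.2.1 a ha b (h hb)⟩
      · rintro a ⟨H₁, hH₁, ha⟩ b hb hab
        exact ⟨H₁, hH₁, (hc hH₁).1.2.2.2.2 a ha b hb hab⟩
      · exact (hc hH₀).2.trans (subset_sUnion_of_mem hH₀))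
    G ⟨hG, subset_rfl⟩
  obtain ⟨hHlf, hGH'⟩ := hmax.1
  refine ⟨⟨H, hHlf.1, hHlf.2.1, hHlf.2.2.1, hHlf.2.2.2.1, hHlf.2.2.2.2, ?_⟩, hGH⟩
  intro a haF haH
  by_contra hcon
  push_neg at hcon
  have hH' : IsLF F {c | c ∈ F ∧ ∃ b ∈ H, a ∩ b ⊆ c} := by
    refine ⟨fun x hx => hx.1, ⟨huniv, Set.univ, hHlf.2.1, inter_subset_right.trans (subset_univ _)⟩, ?_, ?_, ?_⟩
    · rintro ⟨-, b, hb, hab⟩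
      exact (hcon b hb).ne_empty (subset_empty_iff.1 hab)
    · rintro x ⟨hxF, b₁, hb₁, h₁⟩ y ⟨hyF, b₂, hb₂, h₂⟩
      exact ⟨hI x hxF y hyF, b₁ ∩ b₂, hHlf.2.2.2.1 b₁ hb₁ b₂ hb₂,
        fun z hz => ⟨h₁ ⟨hz.1, hz.2.1⟩, h₂ ⟨hz.1, hz.2.2⟩⟩⟩
    · rintro x ⟨hxF, b, hb, hxb⟩ y hyF hxy
      exact ⟨hyF, b, hb, hxb.trans hxy⟩
  have hHsub : H ⊆ {c | c ∈ F ∧ ∃ b ∈ H, a ∩ b ⊆ c} :=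
    fun x hx => ⟨hHlf.1 hx, x, hx, inter_subset_right⟩
  have hsub2 := hmax.2 ⟨hH', hGH'.trans hHsub⟩ hHsub
  exact haH (hsub2 ⟨haF, Set.univ, hHlf.2.1, inter_subset_left⟩)

include hI huniv in
lemma hat_nonempty {a : Set α} (ha : a ∈ F) (hane : a ≠ ∅) : (hat F a).Nonempty := by
  have hG : IsLF F {b | b ∈ F ∧ a ⊆ b} := by
    refine ⟨fun x hx => hx.1, ⟨huniv, subset_univ a⟩, ?_, ?_, ?_⟩
    · rintro ⟨-, h⟩
      exact hane (subset_empty_iff.1 h)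
    · rintro x ⟨hxF, hax⟩ y ⟨hyF, hay⟩
      exact ⟨hI x hxF y hyF, subset_inter hax hay⟩
    · rintro x ⟨hxF, hax⟩ y hyF hxy
      exact ⟨hyF, hax.trans hxy⟩
  obtain ⟨u, hu⟩ := exists_ultra huniv hI hG
  exact ⟨u, hu ⟨ha, subset_rfl⟩⟩

end Wallman

namespace Wallman

variable {α : Type u} {F : Set (Set α)}
variable (hempty : ∅ ∈ F) (huniv : Set.univ ∈ F)
  (hU : ∀ a ∈ F, ∀ b ∈ F, a ∪ b ∈ F) (hI : ∀ a ∈ F, ∀ b ∈ F, a ∩ b ∈ F)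

include huniv hI in
lemma finsetInter_mem_F {ι : Type v} (g : ι → Set α) (hg : ∀ i, g i ∈ F) (t : Finset ι) :
    (⋂ i ∈ t, g i) ∈ F := by
  classical
  induction t using Finset.induction_on with
  | empty => simpa using huniv
  | insert _ _ hnotmem ih =>
    rw [Finset.set_biInter_insert]
    exact hI _ (hg _) _ ih

lemma finsetInter_mem_sets {ι : Type v} (g : ι → Set α)
    (u : LUltra F) (t : Finset ι) (h : ∀ i ∈ t, g i ∈ u.sets) :
    (⋂ i ∈ t, g i) ∈ u.sets := by
  classical
  induction t using Finset.induction_on with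
  | empty => simpa using u.univ_mem
  | @insert j s hnotmem ih =>
    rw [Finset.set_biInter_insert]
    exact u.inter_mem _ (h j (Finset.mem_insert_self j s)) _
      (ih fun i hi => h i (Finset.mem_insert_of_mem hi))

include hempty hU in
lemma isBasis : IsTopologicalBasis ((fun a => (hat F a)ᶜ) '' F) := by
  refine isTopologicalBasis_of_isOpen_of_nhds ?_ ?_
  · rintro u ⟨a, ha, rfl⟩
    exact TopologicalSpace.GenerateOpen.basic _ ⟨a, ha, rfl⟩
  · intro x u hxu hu
    have hu' : TopologicalSpace.GenerateOpen
        {s | ∃ a ∈ F, s = {u : LUltra F | a ∈ u.sets}ᶜ} u := hu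
    clear hu
    induction hu' with
    | basic s hs =>
      obtain ⟨a, ha, rfl⟩ := hs
      exact ⟨(hat F a)ᶜ, ⟨a, ha, rfl⟩, hxu, subset_rfl⟩
    | univ =>
      refine ⟨(hat F ∅)ᶜ, ⟨∅, hempty, rfl⟩, ?_, subset_univ _⟩
      simp [hat_empty]
    | inter u v hu hv ihu ihv =>
      obtain ⟨_, ⟨a, ha, rfl⟩, hxa, hau⟩ := ihu hxu.1
      obtain ⟨_, ⟨b, hb, rfl⟩, hxb, hbv⟩ := ihv hxu.2
      refine ⟨(hat F (a ∪ b))ᶜ, ⟨a ∪ b, hU a ha b hb, rfl⟩, ?_, ?_⟩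
      · rw [hat_union hU ha hb]
        intro h
        rcases h with h | h
        · exact hxa h
        · exact hxb h
      · rw [hat_union hU ha hb, Set.compl_union]
        exact fun y hy => ⟨hau hy.1, hbv hy.2⟩
    | sUnion S hS ih =>
      obtain ⟨t, htS, hxt⟩ := hxu
      obtain ⟨v, hv, hxv, hvt⟩ := ih t htS hxt
      exact ⟨v, hv, hxv, hvt.trans (subset_sUnion_of_mem htS)⟩

include hempty hU in
lemma mem_closed_iff {C : Set (LUltra F)} (hC : IsClosed C) (x : LUltra F) :
    x ∈ C ↔ ∀ a ∈ F, C ⊆ hat F a → x ∈ hat F a := by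
  constructor
  · exact fun hx a _ hCa => hCa hx
  · intro h
    by_contra hx
    obtain ⟨v, ⟨a, ha, rfl⟩, hxv, hvC⟩ :=
      (isBasis hempty hU).exists_subset_of_mem_open hx hC.isOpen_compl
    exact (hxv : x ∉ hat F a) (h a ha fun y hy => by
      by_contra hya
      exact hvC (hya : y ∈ (hat F a)ᶜ) hy)

include huniv hI in
lemma finite_empty_inter {ι : Type v} (g : ι → Set α) (hg : ∀ i, g i ∈ F)
    (h : (⋂ i, hat F (g i)) = ∅) : ∃ t : Finset ι, (⋂ i ∈ t, hat F (g i)) = ∅ := by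
  classical
  by_contra hcon
  push_neg at hcon
  have hne : ∀ t : Finset ι, (⋂ i ∈ t, hat F (g i)).Nonempty := hcon
  set G := {b | b ∈ F ∧ ∃ t : Finset ι, (⋂ i ∈ t, g i) ⊆ b} with hGdef
  have hGlf : IsLF F G := by
    refine ⟨fun x hx => hx.1, ⟨huniv, ∅, by simp⟩, ?_, ?_, ?_⟩
    · rintro ⟨-, t, ht⟩
      obtain ⟨u, hu⟩ := hne t
      have h2 : (⋂ i ∈ t, g i) ∈ u.sets :=
        finsetInter_mem_sets g u t
          (fun i hi => (Set.mem_iInter₂.1 hu) i hi)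
      have : (⋂ i ∈ t, g i) = ∅ := subset_empty_iff.1 ht
      rw [this] at h2
      exact u.empty_notMem h2
    · rintro x ⟨hxF, t₁, h₁⟩ y ⟨hyF, t₂, h₂⟩
      refine ⟨hI x hxF y hyF, t₁ ∪ t₂, ?_⟩
      intro z hz
      rw [Set.mem_iInter₂] at hz
      exact ⟨h₁ (Set.mem_iInter₂.2 fun i hi => hz i (Finset.mem_union_left _ hi)),
        h₂ (Set.mem_iInter₂.2 fun i hi => hz i (Finset.mem_union_right _ hi))⟩
    · rintro x ⟨hxF, t, ht⟩ y hyF hxy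
      exact ⟨hyF, t, ht.trans hxy⟩
  obtain ⟨u, hu⟩ := exists_ultra huniv hI hGlf
  have : u ∈ ⋂ i, hat F (g i) := by
    refine Set.mem_iInter.2 fun i => ?_
    refine hu ⟨hg i, {i}, ?_⟩
    simp
  rw [h] at this
  exact this

include hempty huniv hU hI in
lemma compactSpace : CompactSpace (LUltra F) := by
  apply compactSpace_of_finite_subfamily_closed
  intro ι t ht hinter
  have key : (⋂ j : (Σ i : ι, {a : Set α // a ∈ F ∧ t i ⊆ hat F a}),
      hat F j.2.1) = ∅ := by
    rw [Set.eq_empty_iff_forall_notMem]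
    intro x hx
    rw [Set.mem_iInter] at hx
    have : ∀ i, x ∈ t i := by
      intro i
      rw [mem_closed_iff hempty hU (ht i)]
      intro a ha hta
      exact hx ⟨i, a, ha, hta⟩
    rw [Set.eq_empty_iff_forall_notMem] at hinter
    exact hinter x (Set.mem_iInter.2 this)
  obtain ⟨s, hs⟩ := finite_empty_inter huniv hI _ (fun j => j.2.2.1) key
  classical
  refine ⟨s.image Sigma.fst, ?_⟩
  rw [Set.eq_empty_iff_forall_notMem]
  intro x hx
  rw [Set.mem_iInter₂] at hx
  rw [Set.eq_empty_iff_forall_notMem] at hs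
  refine hs x (Set.mem_iInter₂.2 fun j hj => ?_)
  exact j.2.2.2 (hx j.1 (Finset.mem_image_of_mem Sigma.fst hj))

end Wallman

namespace Wallman

variable {α : Type u} {F : Set (Set α)}
variable (hempty : ∅ ∈ F) (huniv : Set.univ ∈ F)
  (hU : ∀ a ∈ F, ∀ b ∈ F, a ∪ b ∈ F) (hI : ∀ a ∈ F, ∀ b ∈ F, a ∩ b ∈ F)
  (hnormal : ∀ a ∈ F, ∀ b ∈ F, a ∩ b = ∅ →
    ∃ c ∈ F, ∃ d ∈ F, c ∪ d = Set.univ ∧ c ∩ a = ∅ ∧ d ∩ b = ∅)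

include hU hnormal in
lemma sep_points {u v : LUltra F} {a : Set α} (hau : a ∈ u.sets) (hav : a ∉ v.sets) :
    ∃ U V : Set (LUltra F), IsOpen U ∧ IsOpen V ∧ u ∈ U ∧ v ∈ V ∧ U ∩ V = ∅ := by
  have haF : a ∈ F := u.sets_subset hau
  obtain ⟨b, hbv, hab⟩ := v.ultra a haF hav
  have hbF : b ∈ F := v.sets_subset hbv
  obtain ⟨c, hcF, d, hdF, hcd, hca, hdb⟩ := hnormal a haF b hbF hab
  refine ⟨(hat F c)ᶜ, (hat F d)ᶜ,
    TopologicalSpace.GenerateOpen.basic _ ⟨c, hcF, rfl⟩,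
    TopologicalSpace.GenerateOpen.basic _ ⟨d, hdF, rfl⟩, ?_, ?_, ?_⟩
  · intro hc
    have : c ∩ a ∈ u.sets := u.inter_mem c hc a hau
    rw [hca] at this
    exact u.empty_notMem this
  · intro hd
    have : d ∩ b ∈ v.sets := v.inter_mem d hd b hbv
    rw [hdb] at this
    exact v.empty_notMem this
  · rw [← Set.compl_union, ← hat_union hU hcF hdF, hcd, hat_univ, Set.compl_univ]

include hU hnormal in
lemma t2Space : T2Space (LUltra F) := by
  constructor
  intro u v huv
  have hsets : u.sets ≠ v.sets := fun h => huv (lultra_ext h)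
  have : (∃ a, a ∈ u.sets ∧ a ∉ v.sets) ∨ (∃ a, a ∈ v.sets ∧ a ∉ u.sets) := by
    by_contra hcon
    push_neg at hcon
    exact hsets (Set.ext fun a => ⟨fun h => by_contra fun h' => h' (hcon.1 a h),
      fun h => by_contra fun h' => h' (hcon.2 a h)⟩)
  rcases this with ⟨a, hau, hav⟩ | ⟨a, hav, hau⟩
  · obtain ⟨U, V, hUo, hVo, hu, hv, hUV⟩ := sep_points hU hnormal hau hav
    exact ⟨U, V, hUo, hVo, hu, hv, Set.disjoint_iff_inter_eq_empty.2 hUV⟩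
  · obtain ⟨U, V, hUo, hVo, hu, hv, hUV⟩ := sep_points hU hnormal hav hau
    exact ⟨V, U, hVo, hUo, hv, hu, Set.disjoint_iff_inter_eq_empty.2
      (by rw [Set.inter_comm]; exact hUV)⟩

include huniv hI in
lemma hat_finsetInter {ι : Type v} (g : ι → Set α) (hg : ∀ i, g i ∈ F) (t : Finset ι) :
    hat F (⋂ i ∈ t, g i) = ⋂ i ∈ t, hat F (g i) := by
  classical
  induction t using Finset.induction_on with
  | empty => simpa using hat_univ
  | @insert j s hnotmem ih =>
    rw [Finset.set_biInter_insert, hat_inter (hg j) (finsetInter_mem_F huniv hI g hg s),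
      ih, Finset.set_biInter_insert]

end Wallman

namespace Wallman

variable {α : Type u} {F : Set (Set α)}
variable (hempty : ∅ ∈ F) (huniv : Set.univ ∈ F)
  (hU : ∀ a ∈ F, ∀ b ∈ F, a ∪ b ∈ F) (hI : ∀ a ∈ F, ∀ b ∈ F, a ∩ b ∈ F)
  (hnormal : ∀ a ∈ F, ∀ b ∈ F, a ∩ b = ∅ →
    ∃ c ∈ F, ∃ d ∈ F, c ∪ d = Set.univ ∧ c ∩ a = ∅ ∧ d ∩ b = ∅)

include hempty huniv hU hI hnormal in
lemma connectedSpace [TopologicalSpace α] [ConnectedSpace α]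
    (hFclosed : ∀ a ∈ F, IsClosed a) : ConnectedSpace (LUltra F) := by
  classical
  have hne : Nonempty (LUltra F) := by
    obtain ⟨u, -⟩ := hat_nonempty huniv hI huniv
      (by simp [Set.univ_eq_empty_iff, not_isEmpty_of_nonempty])
    exact ⟨u⟩
  refine { toNonempty := hne, isPreconnected_univ := ?_ }
  rw [isPreconnected_iff_subset_of_fully_disjoint_closed isClosed_univ]
  intro C D hCc hDc hcover hdisj
  by_contra hcon
  push_neg at hcon
  obtain ⟨hnC, hnD⟩ := hcon
  have hCD : C ∩ D = ∅ := Set.disjoint_iff_inter_eq_empty.1 hdisj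
  have hCne : C.Nonempty := by
    obtain ⟨x, -, hx⟩ := Set.not_subset.1 hnD
    rcases hcover (Set.mem_univ x) with h | h
    · exact ⟨x, h⟩
    · exact absurd h hx
  have hDne : D.Nonempty := by
    obtain ⟨x, -, hx⟩ := Set.not_subset.1 hnC
    rcases hcover (Set.mem_univ x) with h | h
    · exact absurd h hx
    · exact ⟨x, h⟩
  -- index type for the families of basic closed supersets
  set ι := {a : Set α // a ∈ F ∧ C ⊆ hat F a} ⊕ {a : Set α // a ∈ F ∧ D ⊆ hat F a} with hι
  set g : ι → Set α := Sum.elim Subtype.val Subtype.val with hg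
  have hgF : ∀ j : ι, g j ∈ F := by rintro (j | j) <;> exact j.2.1
  have hiance : (⋂ j : ι, hat F (g j)) = ∅ := by
    rw [Set.eq_empty_iff_forall_notMem]
    intro x hx
    rw [Set.mem_iInter] at hx
    have hxC : x ∈ C := by
      rw [mem_closed_iff hempty hU hCc]
      intro a ha hCa
      exact hx (Sum.inl ⟨a, ha, hCa⟩)
    have hxD : x ∈ D := by
      rw [mem_closed_iff hempty hU hDc]
      intro a ha hDa
      exact hx (Sum.inr ⟨a, ha, hDa⟩)
    rw [Set.eq_empty_iff_forall_notMem] at hCD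
    exact hCD x ⟨hxC, hxD⟩
  obtain ⟨t, ht⟩ := finite_empty_inter huniv hI g hgF hiance
  set c : Set α := ⋂ i ∈ t.toLeft, (i : Set α) with hc
  set d : Set α := ⋂ i ∈ t.toRight, (i : Set α) with hd
  have hcF : c ∈ F := finsetInter_mem_F huniv hI _ (fun i => i.2.1) t.toLeft
  have hdF : d ∈ F := finsetInter_mem_F huniv hI _ (fun i => i.2.1) t.toRight
  have hhatc : hat F c = ⋂ i ∈ t.toLeft, hat F (i : Set α) :=
    hat_finsetInter huniv hI _ (fun i => i.2.1) t.toLeft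
  have hhatd : hat F d = ⋂ i ∈ t.toRight, hat F (i : Set α) :=
    hat_finsetInter huniv hI _ (fun i => i.2.1) t.toRight
  have hChatc : C ⊆ hat F c := by
    rw [hhatc]
    exact Set.subset_iInter₂ fun i _ => i.2.2
  have hDhatd : D ⊆ hat F d := by
    rw [hhatd]
    exact Set.subset_iInter₂ fun i _ => i.2.2
  have hcd_empty : hat F c ∩ hat F d = ∅ := by
    rw [Set.eq_empty_iff_forall_notMem]
    intro u hu
    rw [Set.eq_empty_iff_forall_notMem] at ht
    refine ht u (Set.mem_iInter₂.2 ?_)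
    rintro (j | j) hj
    · have : u ∈ ⋂ i ∈ t.toLeft, hat F (i : Set α) := hhatc ▸ hu.1
      exact Set.mem_iInter₂.1 this j (Finset.mem_toLeft.2 hj)
    · have : u ∈ ⋂ i ∈ t.toRight, hat F (i : Set α) := hhatd ▸ hu.2
      exact Set.mem_iInter₂.1 this j (Finset.mem_toRight.2 hj)
  have hcdX : c ∩ d = ∅ := by
    by_contra hne'
    obtain ⟨u, hu⟩ := hat_nonempty huniv hI (hI c hcF d hdF) hne'
    rw [Set.eq_empty_iff_forall_notMem] at hcd_empty
    exact hcd_empty u ⟨u.superset_mem _ hu c hcF Set.inter_subset_left,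
      u.superset_mem _ hu d hdF Set.inter_subset_right⟩
  obtain ⟨e, heF, f, hfF, hef_cover, hec, hfd⟩ := hnormal c hcF d hdF hcdX
  rcases Set.eq_empty_or_nonempty (e ∩ f) with hef | hef
  · -- e, f form a clopen partition of α; connectedness of α gives contradiction
    have hfe : f = eᶜ := by
      ext x
      constructor
      · intro hxf hxe
        exact (Set.eq_empty_iff_forall_notMem.1 hef) x ⟨hxe, hxf⟩
      · intro hxe
        rcases (hef_cover ▸ Set.mem_univ x : x ∈ e ∪ f) with h | h
        · exact absurd h hxe
        · exact h
    have hclop : IsClopen e := by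
      refine ⟨hFclosed e heF, ?_⟩
      rw [← isClosed_compl_iff, ← hfe]
      exact hFclosed f hfF
    rcases isClopen_iff.1 hclop with he | he
    · -- e = ∅, so f ⊇ ... and d = ∅? No: e ∩ c = ∅ trivial; f = univ so f ∩ d = d = ∅
      have : d = ∅ := by
        rw [he, Set.compl_empty] at hfe
        rw [← hfd, hfe, Set.univ_inter]
      rw [this] at hDhatd
      rw [hat_empty] at hDhatd
      exact Set.not_nonempty_empty (hDne.mono hDhatd)
    · have : c = ∅ := by
        rw [← hec, he, Set.univ_inter]
      rw [this] at hChatc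
      rw [hat_empty] at hChatc
      exact Set.not_nonempty_empty (hCne.mono hChatc)
  · obtain ⟨u, hu⟩ := hat_nonempty huniv hI (hI e heF f hfF) hef.ne_empty
    have hue : e ∈ u.sets := u.superset_mem _ hu e heF Set.inter_subset_left
    have huf : f ∈ u.sets := u.superset_mem _ hu f hfF Set.inter_subset_right
    rcases hcover (Set.mem_univ u) with h | h
    · have : c ∈ u.sets := hChatc h
      have : e ∩ c ∈ u.sets := u.inter_mem e hue c this
      rw [hec] at this
      exact u.empty_notMem this
    · have : d ∈ u.sets := hDhatd h
      have : f ∩ d ∈ u.sets := u.inter_mem f huf d this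
      rw [hfd] at this
      exact u.empty_notMem this

include hempty hU in
lemma secondCountable (hcount : F.Countable) :
    SecondCountableTopology (LUltra F) :=
  (isBasis hempty hU).secondCountableTopology (hcount.image _)

end Wallman


/-! ### Auxiliary: hereditary smallness and coding lemmas -/

section PartA

open Cardinal

lemma heredLt_iff (κ : Cardinal.{1}) (x : ZFSet.{0}) :
    HeredLt κ x ↔ Cardinal.mk x.toSet < κ ∧ ∀ y ∈ x, HeredLt κ y := by
  rw [HeredLt, WellFounded.fix_eq]
  exact Iff.rfl

lemma HeredLt.mem' {κ : Cardinal.{1}} {x y : ZFSet.{0}} (h : HeredLt κ x) (hy : y ∈ x) :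
    HeredLt κ y := ((heredLt_iff κ x).1 h).2 y hy

lemma HeredLt.card' {κ : Cardinal.{1}} {x : ZFSet.{0}} (h : HeredLt κ x) :
    Cardinal.mk x.toSet < κ := ((heredLt_iff κ x).1 h).1

lemma HeredLt.of_zfsubset {κ : Cardinal.{1}} {x y : ZFSet.{0}} (h : HeredLt κ x)
    (hsub : y ⊆ x) : HeredLt κ y := by
  rw [heredLt_iff]
  constructor
  · refine lt_of_le_of_lt ?_ h.card'
    exact Cardinal.mk_le_mk_of_subset (fun z hz => hsub hz)
  · exact fun z hz => h.mem' (hsub hz)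

lemma mem_codeSet {X : ZFSet.{0}} {A : Set ↥X.toSet} {y : ZFSet.{0}} :
    y ∈ codeSet X A ↔ ∃ h : y ∈ X.toSet, (⟨y, h⟩ : ↥X.toSet) ∈ A := by
  rw [codeSet, ZFSet.mem_sep]
  exact ⟨fun ⟨_, h⟩ => h, fun ⟨h, hA⟩ => ⟨h, h, hA⟩⟩

lemma codeSet_zfsubset (X : ZFSet.{0}) (A : Set ↥X.toSet) : codeSet X A ⊆ X :=
  fun _ hy => (ZFSet.mem_sep.1 hy).1

lemma decode_code (X : ZFSet.{0}) (A : Set ↥X.toSet) : decodeSet X (codeSet X A) = A := by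
  ext p
  simp only [decodeSet, Set.mem_setOf_eq, mem_codeSet]
  constructor
  · rintro ⟨h, hA⟩
    convert hA using 1
  · exact fun h => ⟨p.2, by convert h using 1⟩

lemma code_decode {X t : ZFSet.{0}} (h : t ⊆ X) : codeSet X (decodeSet X t) = t := by
  apply ZFSet.ext
  intro y
  rw [mem_codeSet]
  constructor
  · rintro ⟨hy, hA⟩
    exact hA
  · exact fun hy => ⟨h hy, hy⟩

lemma codeSet_empty (X : ZFSet.{0}) : codeSet X (∅ : Set ↥X.toSet) = (∅ : ZFSet.{0}) := by
  apply ZFSet.ext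
  intro y
  rw [mem_codeSet]
  simp [ZFSet.notMem_empty]

lemma codeSet_univ (X : ZFSet.{0}) : codeSet X (Set.univ : Set ↥X.toSet) = X := by
  apply ZFSet.ext
  intro y
  rw [mem_codeSet]
  exact ⟨fun ⟨h, _⟩ => h, fun h => ⟨h, Set.mem_univ _⟩⟩

lemma mem_opensZ {X : ZFSet.{0}} [TopologicalSpace ↥X.toSet] {t : ZFSet.{0}} :
    t ∈ opensZ X ↔ t ⊆ X ∧ IsOpen (decodeSet X t) := by
  rw [opensZ, ZFSet.mem_sep, ZFSet.mem_powerset]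

end PartA


/-! ### Auxiliary: model-theoretic transfer machinery -/

section PartB

open FirstOrder FirstOrder.Language

/-- The membership formula `i ∈ j`. -/
def memFormula {α : Type} (i j : α) : Language.graph.Formula α :=
  Language.adj.formula₂ (FirstOrder.Language.Term.var i) (FirstOrder.Language.Term.var j)

/-- Universal quantification over one fresh variable. -/
noncomputable def allOne {α : Type} (φ : Language.graph.Formula (α ⊕ Unit)) :
    Language.graph.Formula α :=
  φ.iAlls Unit

@[simp] lemma realize_memFormula {N : Type*} [Language.graph.Structure N] {α : Type}
    (i j : α) (v : α → N) :
    (memFormula i j).Realize v ↔ Structure.RelMap Language.adj ![v i, v j] := by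
  simp [memFormula, Formula.realize_rel₂]

@[simp] lemma realize_allOne {N : Type*} [Language.graph.Structure N] {α : Type}
    (φ : Language.graph.Formula (α ⊕ Unit)) (v : α → N) :
    (allOne φ).Realize v ↔ ∀ y : N, φ.Realize (Sum.elim v fun _ => y) := by
  rw [allOne, Formula.realize_iAlls]
  constructor
  · exact fun h y => h fun _ => y
  · intro h i
    exact h (i ())

@[simp] lemma relMap_adj_hkappa {κ : Cardinal.{1}} (x y : ↥(HKappa κ)) :
    Structure.RelMap (L := Language.graph) Language.adj ![x, y] ↔
      (x : ZFSet.{0}) ∈ (y : ZFSet.{0}) :=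
  Iff.rfl

lemma mem_hkappa_iff {κ : Cardinal.{1}} {z : ZFSet.{0}} :
    z ∈ HKappa κ ↔ HeredLt κ z := Iff.rfl

lemma witness_transfer {κ : Cardinal.{1}}
    (M : FirstOrder.Language.graph.ElementarySubstructure (HKappa κ))
    {k w : ℕ} (φ : Language.graph.Formula (Fin k ⊕ Fin w))
    (pH : Fin k → ↥(HKappa κ)) (hpH : ∀ j, pH j ∈ M)
    (hw : ∃ i : Fin w → ↥(HKappa κ), φ.Realize (Sum.elim pH i)) :
    ∃ qH : Fin w → ↥(HKappa κ), (∀ j, qH j ∈ M) ∧ φ.Realize (Sum.elim pH qH) := by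
  classical
  let ψ : Language.graph.Formula (Fin k) := φ.iExs (Fin w)
  have h1 : ψ.Realize pH := by
    rw [Formula.realize_iExs]
    obtain ⟨i, hi⟩ := hw
    exact ⟨i, hi⟩
  let pM : Fin k → M := fun j => ⟨pH j, hpH j⟩
  have h2 : ψ.Realize (((↑) : M → ↥(HKappa κ)) ∘ pM) := h1
  have h3 : ψ.Realize pM := (M.isElementary' ψ pM).1 h2
  rw [Formula.realize_iExs] at h3
  obtain ⟨iM, hiM⟩ := h3
  let e : (Fin k ⊕ Fin w) ≃ Fin (k + w) := finSumFinEquiv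
  let χ : Language.graph.Formula (Fin (k + w)) := φ.relabel e
  have h4 : χ.Realize ((Sum.elim pM iM) ∘ e.symm) := by
    rw [Formula.realize_relabel]
    have : ((Sum.elim pM iM) ∘ e.symm) ∘ e = Sum.elim pM iM := by
      funext a
      simp
    rw [this]
    exact hiM
  have h5 : χ.Realize (((↑) : M → ↥(HKappa κ)) ∘ ((Sum.elim pM iM) ∘ e.symm)) :=
    (M.isElementary' χ _).2 h4
  rw [Formula.realize_relabel] at h5
  refine ⟨fun j => (iM j : ↥(HKappa κ)), fun j => (iM j).2, ?_⟩
  have heq : Sum.elim pH (fun j => ((iM j : M) : ↥(HKappa κ)))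
      = ((((↑) : M → ↥(HKappa κ)) ∘ ((Sum.elim pM iM) ∘ e.symm)) ∘ e) := by
    funext a
    rcases a with a | a <;> simp [pM, e]
  rw [heq]
  exact h5

lemma countable_memOf {κ : Cardinal.{1}}
    (M : FirstOrder.Language.graph.ElementarySubstructure (HKappa κ))
    [hMcount : Countable M] : {z : ZFSet.{0} | MemOf κ M z}.Countable := by
  have hsub : {z : ZFSet.{0} | MemOf κ M z} ⊆
      Set.range (fun m : M => ((m : ↥(HKappa κ)) : ZFSet.{0})) := by
    rintro z ⟨h, hM⟩
    exact ⟨⟨⟨z, h⟩, hM⟩, rfl⟩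
  exact (Set.countable_range _).mono hsub

end PartB


section PartB2

open FirstOrder FirstOrder.Language

variable {κ : Cardinal.{1}}
  (M : FirstOrder.Language.graph.ElementarySubstructure (HKappa κ))

lemma memOf_heredLt {z : ZFSet.{0}} (h : MemOf κ M z) : HeredLt κ z := h.1

lemma memOf_empty (hreg : κ.IsRegular) : MemOf κ M (∅ : ZFSet.{0}) := by
  have hered : HeredLt κ (∅ : ZFSet.{0}) := by
    rw [heredLt_iff]
    constructor
    · have : (∅ : ZFSet.{0}).toSet = ∅ := by
        ext y; exact iff_of_false (ZFSet.notMem_empty y) (Set.notMem_empty y)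
      rw [this]
      simpa using lt_of_lt_of_le Cardinal.aleph0_pos hreg.aleph0_le
    · exact fun y hy => absurd hy (ZFSet.notMem_empty y)
  -- the formula ∀ y, y ∉ x₀ with one witness variable x₀
  let φ : Language.graph.Formula (Fin 0 ⊕ Fin 1) :=
    allOne (memFormula (Sum.inr ()) (Sum.inl (Sum.inr 0))).not
  obtain ⟨q, hqM, hq⟩ := witness_transfer M φ (fun j => j.elim0) (fun j => j.elim0)
    ⟨fun _ => ⟨∅, hered⟩, by
      simp only [φ, realize_allOne, Formula.realize_not, realize_memFormula,
        Sum.elim_inr, Sum.elim_inl, relMap_adj_hkappa]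
      exact fun y => ZFSet.notMem_empty _⟩
  simp only [φ, realize_allOne, Formula.realize_not, realize_memFormula,
    Sum.elim_inr, Sum.elim_inl, relMap_adj_hkappa] at hq
  have hzero : ((q 0 : ↥(HKappa κ)) : ZFSet.{0}) = ∅ := by
    apply ZFSet.ext
    intro y
    simp only [ZFSet.notMem_empty, iff_false]
    intro hy
    exact hq ⟨y, ((q 0).2 : HeredLt κ _).mem' hy⟩ hy
  refine ⟨hzero ▸ (q 0).2, ?_⟩
  have := hqM 0
  convert this using 1
  exact Subtype.ext hzero.symm

lemma memOf_union (hreg : κ.IsRegular) {a b : ZFSet.{0}}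
    (ha : MemOf κ M a) (hb : MemOf κ M b) : MemOf κ M (a ∪ b) := by
  have hered : HeredLt κ (a ∪ b) := by
    rw [heredLt_iff]
    constructor
    · have hsub : (a ∪ b).toSet = a.toSet ∪ b.toSet := by
        ext y; exact ZFSet.mem_union
      rw [hsub]
      exact lt_of_le_of_lt (Cardinal.mk_union_le _ _)
        (Cardinal.add_lt_of_lt hreg.aleph0_le ha.1.card' hb.1.card')
    · intro y hy
      rcases ZFSet.mem_union.1 hy with h | h
      · exact ha.1.mem' h
      · exact hb.1.mem' h
  let φ : Language.graph.Formula (Fin 2 ⊕ Fin 1) :=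
    allOne ((memFormula (Sum.inr ()) (Sum.inl (Sum.inr 0))).iff
      ((memFormula (Sum.inr ()) (Sum.inl (Sum.inl 0))) ⊔
       (memFormula (Sum.inr ()) (Sum.inl (Sum.inl 1)))))
  obtain ⟨q, hqM, hq⟩ := witness_transfer M φ ![⟨a, ha.1⟩, ⟨b, hb.1⟩]
    (by
      intro j
      fin_cases j
      · exact ha.2
      · exact hb.2)
    ⟨fun _ => ⟨a ∪ b, hered⟩, by
      simp only [φ, realize_allOne, Formula.realize_iff, BoundedFormula.realize_sup,
        realize_memFormula, Sum.elim_inr, Sum.elim_inl, relMap_adj_hkappa]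
      intro y
      simpa using ZFSet.mem_union⟩
  simp only [φ, realize_allOne, Formula.realize_iff, BoundedFormula.realize_sup,
    realize_memFormula, Sum.elim_inr, Sum.elim_inl, relMap_adj_hkappa] at hq
  have hz : ((q 0 : ↥(HKappa κ)) : ZFSet.{0}) = a ∪ b := by
    apply ZFSet.ext
    intro y
    rw [ZFSet.mem_union]
    constructor
    · intro hy
      have := hq ⟨y, ((q 0).2 : HeredLt κ _).mem' hy⟩
      simpa using this.1 hy
    · intro hy
      have hyH : HeredLt κ y := by
        rcases hy with h | h
        · exact ha.1.mem' h
        · exact hb.1.mem' h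
      have := hq ⟨y, hyH⟩
      simp only [Matrix.cons_val_zero, Matrix.cons_val_one, Matrix.head_cons] at this
      exact this.2 (by simpa using hy)
  refine ⟨hz ▸ (q 0).2, ?_⟩
  have := hqM 0
  convert this using 1
  exact Subtype.ext hz.symm

lemma memOf_inter (hreg : κ.IsRegular) {a b : ZFSet.{0}}
    (ha : MemOf κ M a) (hb : MemOf κ M b) : MemOf κ M (a ∩ b) := by
  have hered : HeredLt κ (a ∩ b) :=
    ha.1.of_zfsubset fun z hz => (ZFSet.mem_inter.1 hz).1
  let φ : Language.graph.Formula (Fin 2 ⊕ Fin 1) :=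
    allOne ((memFormula (Sum.inr ()) (Sum.inl (Sum.inr 0))).iff
      ((memFormula (Sum.inr ()) (Sum.inl (Sum.inl 0))) ⊓
       (memFormula (Sum.inr ()) (Sum.inl (Sum.inl 1)))))
  obtain ⟨q, hqM, hq⟩ := witness_transfer M φ ![⟨a, ha.1⟩, ⟨b, hb.1⟩]
    (by
      intro j
      fin_cases j
      · exact ha.2
      · exact hb.2)
    ⟨fun _ => ⟨a ∩ b, hered⟩, by
      simp only [φ, realize_allOne, Formula.realize_iff, BoundedFormula.realize_inf,
        realize_memFormula, Sum.elim_inr, Sum.elim_inl, relMap_adj_hkappa]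
      intro y
      simpa using ZFSet.mem_inter⟩
  simp only [φ, realize_allOne, Formula.realize_iff, BoundedFormula.realize_inf,
    realize_memFormula, Sum.elim_inr, Sum.elim_inl, relMap_adj_hkappa] at hq
  have hz : ((q 0 : ↥(HKappa κ)) : ZFSet.{0}) = a ∩ b := by
    apply ZFSet.ext
    intro y
    rw [ZFSet.mem_inter]
    constructor
    · intro hy
      have := hq ⟨y, ((q 0).2 : HeredLt κ _).mem' hy⟩
      simpa using this.1 hy
    · intro hy
      have hyH : HeredLt κ y := ha.1.mem' hy.1
      have := hq ⟨y, hyH⟩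
      simp only [Matrix.cons_val_zero, Matrix.cons_val_one, Matrix.head_cons] at this
      exact this.2 (by simpa using hy)
  refine ⟨hz ▸ (q 0).2, ?_⟩
  have := hqM 0
  convert this using 1
  exact Subtype.ext hz.symm

end PartB2


section PartB3

open FirstOrder FirstOrder.Language

lemma mem_codeSet_of_memX {X : ZFSet.{0}} {A : Set ↥X.toSet} {y : ZFSet.{0}}
    (h : y ∈ X.toSet) : y ∈ codeSet X A ↔ (⟨y, h⟩ : ↥X.toSet) ∈ A := by
  rw [mem_codeSet]
  exact ⟨fun ⟨h', hA⟩ => by convert hA, fun hA => ⟨h, hA⟩⟩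

variable (X : ZFSet.{0}) [TopologicalSpace ↥X.toSet]
  {κ : Cardinal.{1}}
  (M : FirstOrder.Language.graph.ElementarySubstructure (HKappa κ))

lemma heredLt_of_subsetX (hbig : HeredLt κ X.powerset.powerset)
    {a : ZFSet.{0}} (h : a ⊆ X) : HeredLt κ a :=
  (hbig.mem' (ZFSet.mem_powerset.2 fun _ hz => hz)).mem' (ZFSet.mem_powerset.2 h)

lemma heredLt_X (hbig : HeredLt κ X.powerset.powerset) : HeredLt κ X :=
  heredLt_of_subsetX X hbig fun _ hz => hz

lemma lfam_normal [CompactSpace ↥X.toSet] [T2Space ↥X.toSet]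
    (hbig : HeredLt κ X.powerset.powerset)
    (hXM : MemOf κ M X) (htopM : MemOf κ M (opensZ X))
    {A B : Set ↥X.toSet} (hA : A ∈ Lfam X κ M) (hB : B ∈ Lfam X κ M)
    (hdisj : A ∩ B = ∅) :
    ∃ C ∈ Lfam X κ M, ∃ D ∈ Lfam X κ M,
      C ∪ D = Set.univ ∧ C ∩ A = ∅ ∧ D ∩ B = ∅ := by
  classical
  obtain ⟨hXH, hXMem⟩ := hXM
  obtain ⟨hTH, hTMem⟩ := htopM
  obtain ⟨hAc, hAH, hAMem⟩ := hA
  obtain ⟨hBc, hBH, hBMem⟩ := hB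
  -- find disjoint open sets
  obtain ⟨U, V, hUo, hVo, hAU, hBV, hUV⟩ :=
    NormalSpace.normal A B hAc hBc (Set.disjoint_iff_inter_eq_empty.2 hdisj)
  -- the formula
  let α := (Fin 4 ⊕ Fin 4) ⊕ Unit
  let vX : α := Sum.inl (Sum.inl 0)
  let vT : Fin 4 ⊕ Fin 4 := Sum.inl 1
  let va : α := Sum.inl (Sum.inl 2)
  let vb : α := Sum.inl (Sum.inl 3)
  let vc : α := Sum.inl (Sum.inr 0)
  let vd : α := Sum.inl (Sum.inr 1)
  let vu : α := Sum.inl (Sum.inr 2)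
  let vw : α := Sum.inl (Sum.inr 3)
  let vy : α := Sum.inr ()
  let φ : Language.graph.Formula (Fin 4 ⊕ Fin 4) :=
    (memFormula (Sum.inr 2) vT) ⊓ (memFormula (Sum.inr 3) vT) ⊓
    allOne ((memFormula vy vc).imp (memFormula vy vX)) ⊓
    allOne ((memFormula vy vd).imp (memFormula vy vX)) ⊓
    allOne ((memFormula vy vX).imp ((memFormula vy vc).iff (memFormula vy vu).not)) ⊓
    allOne ((memFormula vy vX).imp ((memFormula vy vd).iff (memFormula vy vw).not)) ⊓
    allOne ((memFormula vy vX).imp ((memFormula vy vc) ⊔ (memFormula vy vd))) ⊓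
    allOne ((memFormula vy vc ⊓ memFormula vy va).not) ⊓
    allOne ((memFormula vy vd ⊓ memFormula vy vb).not)
  -- parameters
  let pH : Fin 4 → ↥(HKappa κ) := ![⟨X, hXH⟩, ⟨opensZ X, hTH⟩,
    ⟨codeSet X A, hAH⟩, ⟨codeSet X B, hBH⟩]
  have hpH : ∀ j, pH j ∈ M := by
    intro j
    fin_cases j <;> assumption
  -- ZF witnesses
  have hc0 : HeredLt κ (codeSet X Uᶜ) := heredLt_of_subsetX X hbig (codeSet_zfsubset _ _)
  have hd0 : HeredLt κ (codeSet X Vᶜ) := heredLt_of_subsetX X hbig (codeSet_zfsubset _ _)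
  have hu0 : HeredLt κ (codeSet X U) := heredLt_of_subsetX X hbig (codeSet_zfsubset _ _)
  have hw0 : HeredLt κ (codeSet X V) := heredLt_of_subsetX X hbig (codeSet_zfsubset _ _)
  have huT : codeSet X U ∈ opensZ X :=
    mem_opensZ.2 ⟨codeSet_zfsubset _ _, by rw [decode_code]; exact hUo⟩
  have hwT : codeSet X V ∈ opensZ X :=
    mem_opensZ.2 ⟨codeSet_zfsubset _ _, by rw [decode_code]; exact hVo⟩
  have hwitness : ∃ i : Fin 4 → ↥(HKappa κ), φ.Realize (Sum.elim pH i) := by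
    refine ⟨![⟨codeSet X Uᶜ, hc0⟩, ⟨codeSet X Vᶜ, hd0⟩,
      ⟨codeSet X U, hu0⟩, ⟨codeSet X V, hw0⟩], ?_⟩
    simp only [φ, pH, vX, vT, va, vb, vc, vd, vu, vw, vy, BoundedFormula.realize_inf,
      Formula.realize_not, BoundedFormula.realize_imp, BoundedFormula.realize_sup,
      Formula.realize_iff, Formula.realize_inf, Formula.realize_sup, Formula.realize_imp,
      BoundedFormula.realize_bot, BoundedFormula.realize_iff,
      realize_allOne, realize_memFormula, Sum.elim_inl, Sum.elim_inr,
      relMap_adj_hkappa, Matrix.cons_val_zero, Matrix.cons_val_one, Matrix.head_cons,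
      Matrix.cons_val_two, Matrix.cons_val_three, Matrix.tail_cons, BoundedFormula.realize_not]
    refine ⟨⟨⟨⟨⟨⟨⟨⟨?_, ?_⟩, ?_⟩, ?_⟩, ?_⟩, ?_⟩, ?_⟩, ?_⟩, ?_⟩
    · exact huT
    · exact hwT
    · exact fun y hy => codeSet_zfsubset _ _ hy
    · exact fun y hy => codeSet_zfsubset _ _ hy
    · intro y hy
      rw [mem_codeSet_of_memX (hy : (y : ZFSet) ∈ X.toSet),
        mem_codeSet_of_memX (hy : (y : ZFSet) ∈ X.toSet)]
      exact Iff.rfl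
    · intro y hy
      rw [mem_codeSet_of_memX (hy : (y : ZFSet) ∈ X.toSet),
        mem_codeSet_of_memX (hy : (y : ZFSet) ∈ X.toSet)]
      exact Iff.rfl
    · intro y hy
      rw [mem_codeSet_of_memX (hy : (y : ZFSet) ∈ X.toSet),
        mem_codeSet_of_memX (hy : (y : ZFSet) ∈ X.toSet)]
      by_contra hcon
      push_neg at hcon
      simp only [Set.mem_compl_iff, not_not] at hcon
      exact (Set.eq_empty_iff_forall_notMem.1 (Set.disjoint_iff_inter_eq_empty.1 hUV))
          _ ⟨hcon.1, hcon.2⟩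
    · rintro y ⟨hyc, hya⟩
      obtain ⟨hyX, hyA⟩ := mem_codeSet.1 hya
      rw [mem_codeSet_of_memX hyX] at hyc
      exact hyc (hAU hyA)
    · rintro y ⟨hyd, hyb⟩
      obtain ⟨hyX, hyB⟩ := mem_codeSet.1 hyb
      rw [mem_codeSet_of_memX hyX] at hyd
      exact hyd (hBV hyB)
  obtain ⟨q, hqM, hq⟩ := witness_transfer M φ pH hpH hwitness
  simp only [φ, pH, vX, vT, va, vb, vc, vd, vu, vw, vy, BoundedFormula.realize_inf,
    Formula.realize_not, BoundedFormula.realize_imp, BoundedFormula.realize_sup,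
    Formula.realize_iff, Formula.realize_inf, Formula.realize_sup, Formula.realize_imp,
    BoundedFormula.realize_bot, BoundedFormula.realize_iff,
    realize_allOne, realize_memFormula, Sum.elim_inl, Sum.elim_inr,
    relMap_adj_hkappa, Matrix.cons_val_zero, Matrix.cons_val_one, Matrix.head_cons,
    Matrix.cons_val_two, Matrix.cons_val_three, Matrix.tail_cons,
    BoundedFormula.realize_not] at hq
  obtain ⟨⟨⟨⟨⟨⟨⟨⟨huT', hwT'⟩, hsubc⟩, hsubd⟩, hcomplc⟩, hcompld⟩, hcover⟩, hdisjca⟩, hdisjdb⟩ := hq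
  set c : ZFSet.{0} := ((q 0 : ↥(HKappa κ)) : ZFSet.{0}) with hcdef
  set d : ZFSet.{0} := ((q 1 : ↥(HKappa κ)) : ZFSet.{0}) with hddef
  set uz : ZFSet.{0} := ((q 2 : ↥(HKappa κ)) : ZFSet.{0}) with huzdef
  set wz : ZFSet.{0} := ((q 3 : ↥(HKappa κ)) : ZFSet.{0}) with hwzdef
  have hcX : c ⊆ X := fun z hz => hsubc ⟨z, ((q 0).2 : HeredLt κ _).mem' hz⟩ hz
  have hdX : d ⊆ X := fun z hz => hsubd ⟨z, ((q 1).2 : HeredLt κ _).mem' hz⟩ hz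
  have hmemX : ∀ p : ↥X.toSet, HeredLt κ (p : ZFSet.{0}) :=
    fun p => (heredLt_X X hbig).mem' p.2
  set C : Set ↥X.toSet := decodeSet X c with hCdef
  set D : Set ↥X.toSet := decodeSet X d with hDdef
  have hCeq : C = (decodeSet X uz)ᶜ := by
    ext p
    have := hcomplc ⟨(p : ZFSet.{0}), hmemX p⟩ p.2
    simpa [hCdef, decodeSet] using this
  have hDeq : D = (decodeSet X wz)ᶜ := by
    ext p
    have := hcompld ⟨(p : ZFSet.{0}), hmemX p⟩ p.2
    simpa [hDdef, decodeSet] using this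
  have hCclosed : IsClosed C := by
    rw [hCeq]
    exact (mem_opensZ.1 huT').2.isClosed_compl
  have hDclosed : IsClosed D := by
    rw [hDeq]
    exact (mem_opensZ.1 hwT').2.isClosed_compl
  have hCL : C ∈ Lfam X κ M := by
    refine ⟨hCclosed, ?_⟩
    rw [hCdef, code_decode hcX]
    exact ⟨(q 0).2, hqM 0⟩
  have hDL : D ∈ Lfam X κ M := by
    refine ⟨hDclosed, ?_⟩
    rw [hDdef, code_decode hdX]
    exact ⟨(q 1).2, hqM 1⟩
  refine ⟨C, hCL, D, hDL, ?_, ?_, ?_⟩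
  · rw [Set.eq_univ_iff_forall]
    intro p
    rcases hcover ⟨(p : ZFSet.{0}), hmemX p⟩ p.2 with h | h
    · exact Or.inl h
    · exact Or.inr h
  · rw [Set.eq_empty_iff_forall_notMem]
    rintro p ⟨hpC, hpA⟩
    refine hdisjca ⟨(p : ZFSet.{0}), hmemX p⟩ ⟨hpC, ?_⟩
    rw [mem_codeSet_of_memX p.2]
    convert hpA
  · rw [Set.eq_empty_iff_forall_notMem]
    rintro p ⟨hpD, hpB⟩
    refine hdisjdb ⟨(p : ZFSet.{0}), hmemX p⟩ ⟨hpD, ?_⟩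
    rw [mem_codeSet_of_memX p.2]
    convert hpB

end PartB3


section Final

lemma codeSet_union (X : ZFSet.{0}) (A B : Set ↥X.toSet) :
    codeSet X (A ∪ B) = codeSet X A ∪ codeSet X B := by
  apply ZFSet.ext
  intro y
  rw [ZFSet.mem_union, mem_codeSet, mem_codeSet, mem_codeSet]
  constructor
  · rintro ⟨h, hAB | hAB⟩
    · exact Or.inl ⟨h, hAB⟩
    · exact Or.inr ⟨h, hAB⟩
  · rintro (⟨h, hA⟩ | ⟨h, hB⟩)
    · exact ⟨h, Or.inl hA⟩
    · exact ⟨h, Or.inr hB⟩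

lemma codeSet_inter (X : ZFSet.{0}) (A B : Set ↥X.toSet) :
    codeSet X (A ∩ B) = codeSet X A ∩ codeSet X B := by
  apply ZFSet.ext
  intro y
  rw [ZFSet.mem_inter, mem_codeSet, mem_codeSet, mem_codeSet]
  constructor
  · rintro ⟨h, hA, hB⟩
    exact ⟨⟨h, hA⟩, ⟨h, hB⟩⟩
  · rintro ⟨⟨h, hA⟩, ⟨h', hB⟩⟩
    refine ⟨h, hA, ?_⟩
    convert hB

end Final


/-- For a Hausdorff continuum `X`, a sufficiently large regular `κ` with
`X ∈ H(κ)`, and a countable elementary submodel `M ≺ H(κ)` with `X ∈ M`, the lattice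
`L = 2^X ∩ M` is a countable normal sublattice of the closed-set lattice of `X`, and its
Wallman space `wL` is a metrizable continuum. -/
theorem Lfam_countable_normal_and_wallman_metrizable_continuum
    (X : ZFSet.{0}) [TopologicalSpace ↥X.toSet] [CompactSpace ↥X.toSet]
    [T2Space ↥X.toSet] [ConnectedSpace ↥X.toSet]
    (κ : Cardinal.{1}) (hreg : κ.IsRegular) (hbig : HeredLt κ X.powerset.powerset)
    (M : FirstOrder.Language.graph.ElementarySubstructure (HKappa κ))
    (hMcount : Countable M) (hXM : MemOf κ M X) (htopM : MemOf κ M (opensZ X)) :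
    (Lfam X κ M).Countable ∧
    ∅ ∈ Lfam X κ M ∧ Set.univ ∈ Lfam X κ M ∧
    (∀ a ∈ Lfam X κ M, ∀ b ∈ Lfam X κ M, a ∪ b ∈ Lfam X κ M ∧ a ∩ b ∈ Lfam X κ M) ∧
    (∀ a ∈ Lfam X κ M, ∀ b ∈ Lfam X κ M, a ∩ b = ∅ →
      ∃ c ∈ Lfam X κ M, ∃ d ∈ Lfam X κ M, c ∪ d = Set.univ ∧ c ∩ a = ∅ ∧ d ∩ b = ∅) ∧
    CompactSpace (LUltra (Lfam X κ M)) ∧ T2Space (LUltra (Lfam X κ M)) ∧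
    ConnectedSpace (LUltra (Lfam X κ M)) ∧
    TopologicalSpace.MetrizableSpace (LUltra (Lfam X κ M)) := by
  classical
  haveI := hMcount
  -- basic lattice facts about L = Lfam X κ M
  have hempty : (∅ : Set ↥X.toSet) ∈ Lfam X κ M := by
    refine ⟨isClosed_empty, ?_⟩
    rw [codeSet_empty]
    exact memOf_empty M hreg
  have huniv : (Set.univ : Set ↥X.toSet) ∈ Lfam X κ M := by
    refine ⟨isClosed_univ, ?_⟩
    rw [codeSet_univ]
    exact hXM
  have hU : ∀ a ∈ Lfam X κ M, ∀ b ∈ Lfam X κ M, a ∪ b ∈ Lfam X κ M := by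
    intro a ha b hb
    refine ⟨ha.1.union hb.1, ?_⟩
    rw [codeSet_union]
    exact memOf_union M hreg ha.2 hb.2
  have hI : ∀ a ∈ Lfam X κ M, ∀ b ∈ Lfam X κ M, a ∩ b ∈ Lfam X κ M := by
    intro a ha b hb
    refine ⟨ha.1.inter hb.1, ?_⟩
    rw [codeSet_inter]
    exact memOf_inter M hreg ha.2 hb.2
  have hUnion : ∀ a ∈ Lfam X κ M, ∀ b ∈ Lfam X κ M,
      a ∪ b ∈ Lfam X κ M ∧ a ∩ b ∈ Lfam X κ M :=
    fun a ha b hb => ⟨hU a ha b hb, hI a ha b hb⟩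
  have hnormal : ∀ a ∈ Lfam X κ M, ∀ b ∈ Lfam X κ M, a ∩ b = ∅ →
      ∃ c ∈ Lfam X κ M, ∃ d ∈ Lfam X κ M,
        c ∪ d = Set.univ ∧ c ∩ a = ∅ ∧ d ∩ b = ∅ := by
    intro a ha b hb hab
    exact lfam_normal X M hbig hXM htopM ha hb hab
  have hcount : (Lfam X κ M).Countable := by
    apply Set.countable_of_injective_of_countable_image
      (f := fun A => codeSet X A)
    · intro A hA B hB hAB
      have := congrArg (decodeSet X) hAB
      rwa [decode_code, decode_code] at this
    · refine Set.Countable.mono ?_ (countable_memOf M)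
      rintro z ⟨A, hA, rfl⟩
      exact hA.2
  have hFclosed : ∀ a ∈ Lfam X κ M, IsClosed a := fun a ha => ha.1
  haveI hcompact : CompactSpace (LUltra (Lfam X κ M)) :=
    Wallman.compactSpace hempty huniv hU hI
  haveI ht2 : T2Space (LUltra (Lfam X κ M)) :=
    Wallman.t2Space hU hnormal
  haveI hconn : ConnectedSpace (LUltra (Lfam X κ M)) :=
    Wallman.connectedSpace hempty huniv hU hI hnormal hFclosed
  haveI hsc : SecondCountableTopology (LUltra (Lfam X κ M)) :=
    Wallman.secondCountable hempty hU hcount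
  refine ⟨hcount, hempty, huniv, hUnion, hnormal, hcompact, ht2, hconn, ?_⟩
  exact TopologicalSpace.metrizableSpace_of_t3_secondCountable (LUltra (Lfam X κ M))
end

section
/- For a compact Hausdorff space X, the hyperspace C(X) of subcontinua of X with the Vietoris topology is homeomorphic to the Wallman space wK* of the lattice K* of subsets of C(X) generated under finite unions and intersections by the sets F* for finite F ⊆ 2^X, where F* = C(X) \ {G ∈ C(X) : G ∩ ⋂F = ∅ and G is not contained in any F ∈ F}. -/
open Set TopologicalSpace FirstOrder

universe u v

/-- The hyperspace `C(X)` of subcontinua (nonempty closed connected subsets) of `X`. -/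
def Subcontinua (X : Type u) [TopologicalSpace X] : Type u :=
  {A : Set X // IsClosed A ∧ IsConnected A}

/-- The Vietoris topology on the hyperspace of subcontinua. -/
instance Subcontinua.instTopologicalSpace (X : Type u) [TopologicalSpace X] :
    TopologicalSpace (Subcontinua X) :=
  TopologicalSpace.generateFrom
    ({s | ∃ U : Set X, IsOpen U ∧ s = {A : Subcontinua X | A.1 ⊆ U}} ∪
     {s | ∃ U : Set X, IsOpen U ∧ s = {A : Subcontinua X | (A.1 ∩ U).Nonempty}})

/-- The basic closed set `F*` in `C(X)` determined by a finite family `F` of closed sets: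
`F* = C(X) \ {G ∈ C(X) : G ∩ ⋂F = ∅ ∧ ∀ F ∈ F, ¬ G ⊆ F}`. -/
def starSet {X : Type u} [TopologicalSpace X] (F : Finset (Set X)) : Set (Subcontinua X) :=
  {G | ¬ ((G.1 ∩ ⋂₀ (↑F : Set (Set X))) = ∅ ∧ ∀ s ∈ F, ¬ G.1 ⊆ s)}

/-- The sublattice of subsets of `α` generated by a family `B` under finite unions and
finite intersections. -/
inductive LatGen {α : Type u} (B : Set (Set α)) : Set α → Prop
  | base {s : Set α} : s ∈ B → LatGen B s
  | union {s t : Set α} : LatGen B s → LatGen B t → LatGen B (s ∪ t)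
  | inter {s t : Set α} : LatGen B s → LatGen B t → LatGen B (s ∩ t)
section WallmanAux

variable {X : Type u} [TopologicalSpace X]

/-- The generating family of basic closed sets `F*`. -/
abbrev Bset (X : Type u) [TopologicalSpace X] : Set (Set (Subcontinua X)) :=
  {S | ∃ F : Finset (Set X), (∀ s ∈ F, IsClosed s) ∧ S = starSet F}

lemma sub_nonempty (G : Subcontinua X) : G.1.Nonempty := G.2.2.1

lemma mem_starSet_iff {F : Finset (Set X)} {G : Subcontinua X} :
    G ∈ starSet F ↔ (G.1 ∩ ⋂₀ (↑F : Set (Set X))).Nonempty ∨ ∃ s ∈ F, G.1 ⊆ s := by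
  unfold starSet
  simp only [Set.mem_setOf_eq, not_and_or, ← Set.nonempty_iff_ne_empty]
  push_neg
  rfl

lemma starSet_empty : starSet (∅ : Finset (Set X)) = Set.univ := by
  ext G
  simp [mem_starSet_iff, (sub_nonempty G).mono (Set.subset_univ _), sub_nonempty G]

lemma latGen_univ : LatGen (Bset X) (Set.univ : Set (Subcontinua X)) :=
  LatGen.base ⟨∅, by simp, starSet_empty.symm⟩

lemma starSet_singleton (C : Set X) :
    starSet ({C} : Finset (Set X)) = {G : Subcontinua X | (G.1 ∩ C).Nonempty} := by
  ext G
  simp only [mem_starSet_iff, Finset.coe_singleton, Set.sInter_singleton, Finset.mem_singleton,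
    Set.mem_setOf_eq, exists_eq_left]
  constructor
  · rintro (h | h)
    · exact h
    · obtain ⟨x, hx⟩ := sub_nonempty G
      exact ⟨x, hx, h hx⟩
  · exact Or.inl

open scoped Classical in
/-- The finite family whose star is `{G | G ⊆ D}`. -/
noncomputable def subF (D : Set X) : Finset (Set X) := {D, ∅}

lemma starSet_subF (D : Set X) :
    starSet (subF D) = {G : Subcontinua X | G.1 ⊆ D} := by
  classical
  ext G
  have h1 : (↑(subF D) : Set (Set X)) = {D, ∅} := by
    simp [subF]
  have h2 : ⋂₀ ({D, ∅} : Set (Set X)) = (∅ : Set X) := by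
    simp
  simp only [mem_starSet_iff, h1, h2, Set.inter_empty, Set.mem_setOf_eq]
  constructor
  · rintro (h | ⟨s, hs, hGs⟩)
    · exact absurd h (by simp)
    · rcases (by simpa [subF] using hs : s = D ∨ s = ∅) with rfl | rfl
      · exact hGs
      · obtain ⟨x, hx⟩ := sub_nonempty G
        exact absurd (hGs hx) (Set.notMem_empty x)
  · intro h
    exact Or.inr ⟨D, by simp [subF], h⟩

lemma mem_subF_closed {D : Set X} (hD : IsClosed D) : ∀ s ∈ subF D, IsClosed s := by
  intro s hs
  rcases (by simpa [subF] using hs : s = D ∨ s = ∅) with rfl | rfl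
  · exact hD
  · exact isClosed_empty

lemma latGen_subset {D : Set X} (hD : IsClosed D) :
    LatGen (Bset X) {G : Subcontinua X | G.1 ⊆ D} :=
  LatGen.base ⟨subF D, mem_subF_closed hD, (starSet_subF D).symm⟩

lemma latGen_hits {C : Set X} (hC : IsClosed C) :
    LatGen (Bset X) {G : Subcontinua X | (G.1 ∩ C).Nonempty} :=
  LatGen.base ⟨{C}, by simpa using hC, (starSet_singleton C).symm⟩

/-- Vietoris subbasic open sets. -/
lemma isOpen_vSub {U : Set X} (hU : IsOpen U) :
    IsOpen {A : Subcontinua X | A.1 ⊆ U} :=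
  TopologicalSpace.isOpen_generateFrom_of_mem (Or.inl ⟨U, hU, rfl⟩)

lemma isOpen_vHit {U : Set X} (hU : IsOpen U) :
    IsOpen {A : Subcontinua X | (A.1 ∩ U).Nonempty} :=
  TopologicalSpace.isOpen_generateFrom_of_mem (Or.inr ⟨U, hU, rfl⟩)

lemma compl_starSet (F : Finset (Set X)) :
    (starSet F)ᶜ = {A : Subcontinua X | A.1 ⊆ (⋂₀ (↑F : Set (Set X)))ᶜ} ∩
      ⋂ s ∈ F, {A : Subcontinua X | (A.1 ∩ sᶜ).Nonempty} := by
  ext G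
  simp only [Set.mem_compl_iff, mem_starSet_iff, Set.mem_inter_iff, Set.mem_setOf_eq,
    Set.mem_iInter, not_or, not_exists, not_and]
  constructor
  · rintro ⟨h1, h2⟩
    refine ⟨?_, fun s hs => Set.inter_compl_nonempty_iff.2 (h2 s hs)⟩
    rw [Set.subset_compl_iff_disjoint_right]
    exact Set.disjoint_iff_inter_eq_empty.2 (Set.not_nonempty_iff_eq_empty.1 h1)
  · rintro ⟨h1, h2⟩
    refine ⟨?_, fun s hs => Set.inter_compl_nonempty_iff.1 (h2 s hs)⟩
    rw [Set.subset_compl_iff_disjoint_right] at h1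
    simp [Set.disjoint_iff_inter_eq_empty.1 h1]

lemma isClosed_starSet {F : Finset (Set X)} (hF : ∀ s ∈ F, IsClosed s) :
    IsClosed (starSet F) := by
  rw [← isOpen_compl_iff, compl_starSet]
  exact ((isOpen_vSub (isClosed_sInter (by simpa using hF)).isOpen_compl).inter
    (isOpen_biInter_finset fun s hs => isOpen_vHit (hF s hs).isOpen_compl))

lemma latGen_isClosed {a : Set (Subcontinua X)} (ha : LatGen (Bset X) a) : IsClosed a := by
  induction ha with
  | base h => obtain ⟨F, hF, rfl⟩ := h; exact isClosed_starSet hF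
  | union _ _ h1 h2 => exact h1.union h2
  | inter _ _ h1 h2 => exact h1.inter h2

lemma latGen_finset_iInter {ι : Type v} (F : Finset ι) (f : ι → Set (Subcontinua X))
    (h : ∀ i ∈ F, LatGen (Bset X) (f i)) : LatGen (Bset X) (⋂ i ∈ F, f i) := by
  classical
  induction F using Finset.induction with
  | empty => simpa using latGen_univ
  | @insert a s ha ih =>
      rw [Finset.set_biInter_insert]
      exact (h a (Finset.mem_insert_self a s)).inter
        (ih fun i hi => h i (Finset.mem_insert_of_mem hi))

end WallmanAux
section WallmanSep

variable {X : Type u} [TopologicalSpace X] [CompactSpace X] [T2Space X]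

lemma exists_closed_sep {s t : Set X} (hs : IsClosed s) (ht : IsClosed t)
    (h : Disjoint s t) : ∃ A : Set X, IsClosed A ∧ s ⊆ A ∧ A ∩ t = ∅ := by
  obtain ⟨U, V, hU, hV, hsU, htV, hUV⟩ := normal_separation hs ht h
  refine ⟨Vᶜ, hV.isClosed_compl, hsU.trans (Set.subset_compl_iff_disjoint_right.2 hUV), ?_⟩
  rw [Set.eq_empty_iff_forall_notMem]
  rintro x ⟨hxV, hxt⟩
  exact hxV (htV hxt)

/-- Key disjunction property: the lattice separates points from closed lattice sets. -/
lemma disjunctive {a : Set (Subcontinua X)} (ha : LatGen (Bset X) a) :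
    ∀ G : Subcontinua X, G ∉ a → ∃ b, LatGen (Bset X) b ∧ G ∈ b ∧ a ∩ b = ∅ := by
  induction ha with
  | @base S h =>
      obtain ⟨F, hF, rfl⟩ := h
      intro G hG
      rw [mem_starSet_iff, not_or] at hG
      obtain ⟨h1, h2⟩ := hG
      push_neg at h2
      -- closed set A ⊇ G with A ∩ ⋂₀F = ∅
      obtain ⟨A, hAc, hGA, hAD⟩ := exists_closed_sep G.2.1
        (isClosed_sInter (s := (↑F : Set (Set X))) (by simpa using hF))
        (by rw [Set.disjoint_iff_inter_eq_empty, ← Set.not_nonempty_iff_eq_empty]; exact h1)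
      -- for each s ∈ F, a closed set C s meeting G with C s ∩ s = ∅
      have hCex : ∀ s : Set X, ∃ C : Set X, IsClosed C ∧
          (s ∈ F → (G.1 ∩ C).Nonempty ∧ C ∩ s = ∅) := by
        intro s
        by_cases hs : s ∈ F
        · obtain ⟨x, hxG, hxs⟩ := Set.not_subset_iff_exists_mem_notMem.1 (h2 s hs)
          obtain ⟨C, hCc, hxC, hCs⟩ := exists_closed_sep isClosed_singleton (hF s hs)
            (by simpa using hxs)
          exact ⟨C, hCc, fun _ => ⟨⟨x, hxG, hxC (Set.mem_singleton x)⟩, hCs⟩⟩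
        · exact ⟨Set.univ, isClosed_univ, fun h => absurd h hs⟩
      choose C hCc hCprop using hCex
      refine ⟨{H : Subcontinua X | H.1 ⊆ A} ∩
        ⋂ s ∈ F, {H : Subcontinua X | (H.1 ∩ C s).Nonempty}, ?_, ?_, ?_⟩
      · exact (latGen_subset hAc).inter
          (latGen_finset_iInter F _ fun s hs => latGen_hits (hCc s))
      · exact ⟨hGA, Set.mem_iInter₂.2 fun s hs => ((hCprop s hs).1)⟩
      · rw [Set.eq_empty_iff_forall_notMem]
        rintro H ⟨hHstar, hHA, hHC⟩
        rw [mem_starSet_iff] at hHstar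
        rcases hHstar with hne | ⟨s, hs, hHs⟩
        · obtain ⟨x, hx1, hx2⟩ := hne
          exact Set.eq_empty_iff_forall_notMem.1 hAD x ⟨hHA hx1, hx2⟩
        · obtain ⟨y, hy1, hy2⟩ := Set.mem_iInter₂.1 hHC s hs
          exact Set.eq_empty_iff_forall_notMem.1 (hCprop s hs).2 y ⟨hy2, hHs hy1⟩
  | @union s t _ _ ih1 ih2 =>
      intro G hG
      obtain ⟨b1, hb1, hGb1, h1⟩ := ih1 G (fun h => hG (Or.inl h))
      obtain ⟨b2, hb2, hGb2, h2⟩ := ih2 G (fun h => hG (Or.inr h))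
      refine ⟨b1 ∩ b2, hb1.inter hb2, ⟨hGb1, hGb2⟩, ?_⟩
      rw [Set.eq_empty_iff_forall_notMem]
      rintro H ⟨hst, hb1', hb2'⟩
      rcases hst with h | h
      · exact Set.eq_empty_iff_forall_notMem.1 h1 H ⟨h, hb1'⟩
      · exact Set.eq_empty_iff_forall_notMem.1 h2 H ⟨h, hb2'⟩
  | @inter s t _ _ ih1 ih2 =>
      intro G hG
      by_cases h : G ∈ s
      · obtain ⟨b, hb, hGb, hbt⟩ := ih2 G (fun h2 => hG ⟨h, h2⟩)
        refine ⟨b, hb, hGb, ?_⟩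
        rw [Set.eq_empty_iff_forall_notMem]
        rintro H ⟨⟨_, h2⟩, hb'⟩
        exact Set.eq_empty_iff_forall_notMem.1 hbt H ⟨h2, hb'⟩
      · obtain ⟨b, hb, hGb, hbs⟩ := ih1 G h
        refine ⟨b, hb, hGb, ?_⟩
        rw [Set.eq_empty_iff_forall_notMem]
        rintro H ⟨⟨h1, _⟩, hb'⟩
        exact Set.eq_empty_iff_forall_notMem.1 hbs H ⟨h1, hb'⟩

/-- The lattice separates points of `C(X)`. -/
lemma sep_points {G H : Subcontinua X} (hne : G ≠ H) :
    ∃ b, LatGen (Bset X) b ∧ G ∈ b ∧ H ∉ b := by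
  have hne1 : G.1 ≠ H.1 := fun h => hne (Subtype.ext h)
  by_cases hsub : G.1 ⊆ H.1
  · -- H has a point outside G
    have : ¬ H.1 ⊆ G.1 := fun h => hne1 (Set.Subset.antisymm hsub h)
    obtain ⟨x, hxH, hxG⟩ := Set.not_subset_iff_exists_mem_notMem.1 this
    obtain ⟨A, hAc, hGA, hAx⟩ := exists_closed_sep G.2.1 isClosed_singleton
      (by simpa using hxG)
    refine ⟨{K : Subcontinua X | K.1 ⊆ A}, latGen_subset hAc, hGA, ?_⟩
    intro h
    exact Set.eq_empty_iff_forall_notMem.1 hAx x ⟨h hxH, Set.mem_singleton x⟩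
  · obtain ⟨x, hxG, hxH⟩ := Set.not_subset_iff_exists_mem_notMem.1 hsub
    obtain ⟨Cs, hCc, hxC, hCH⟩ := exists_closed_sep isClosed_singleton H.2.1
      (by simpa using hxH)
    refine ⟨{K : Subcontinua X | (K.1 ∩ Cs).Nonempty}, latGen_hits hCc,
      ⟨x, hxG, hxC (Set.mem_singleton x)⟩, ?_⟩
    rintro ⟨y, hy1, hy2⟩
    exact Set.eq_empty_iff_forall_notMem.1 hCH y ⟨hy2, hy1⟩

end WallmanSep
section WallmanMap

variable {X : Type u} [TopologicalSpace X] [CompactSpace X] [T2Space X]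

/-- The lattice generated by the basic sets. -/
abbrev Lset (X : Type u) [TopologicalSpace X] : Set (Set (Subcontinua X)) :=
  {S | LatGen (Bset X) S}

/-- The canonical map `C(X) → wK*`. -/
def toUltra (G : Subcontinua X) : LUltra (Lset X) where
  sets := {a | LatGen (Bset X) a ∧ G ∈ a}
  sets_subset := fun a ha => ha.1
  univ_mem := ⟨latGen_univ, Set.mem_univ G⟩
  empty_notMem := fun h => h.2
  inter_mem := fun a ha b hb => ⟨ha.1.inter hb.1, ha.2, hb.2⟩
  superset_mem := fun a ha b hbF hab => ⟨hbF, hab ha.2⟩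
  ultra := by
    intro a haF hna
    have hGa : G ∉ a := fun h => hna ⟨haF, h⟩
    obtain ⟨b, hb, hGb, hab⟩ := disjunctive haF G hGa
    exact ⟨b, ⟨hb, hGb⟩, hab⟩

lemma toUltra_injective : Function.Injective (toUltra (X := X)) := by
  intro G H h
  by_contra hne
  obtain ⟨b, hb, hGb, hHb⟩ := sep_points hne
  have h1 : b ∈ (toUltra G).sets := ⟨hb, hGb⟩
  rw [h] at h1
  exact hHb h1.2

end WallmanMap
lemma LUltra.ext' {α : Type v} {F : Set (Set α)} {u v : LUltra F}
    (h : u.sets = v.sets) : u = v := by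
  cases u; cases v; cases h; rfl

section WallmanSurj

variable {X : Type u} [TopologicalSpace X] [CompactSpace X] [T2Space X]

lemma toUltra_surjective : Function.Surjective (toUltra (X := X)) := by
  intro u
  -- the filter generated by u.sets is proper
  have key : ∀ t : Set (Set (Subcontinua X)), t.Finite → t ⊆ u.sets → ⋂₀ t ∈ u.sets := by
    intro t htf
    refine Set.Finite.induction_on (motive := fun t _ => t ⊆ u.sets → ⋂₀ t ∈ u.sets) t htf ?_ ?_
    · intro _; simpa using u.univ_mem
    · intro a s _ _ ih hsub
      rw [Set.sInter_insert]
      exact u.inter_mem _ (hsub (Set.mem_insert a s)) _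
        (ih fun x hx => hsub (Set.mem_insert_of_mem a hx))
  have hfin : ∀ t ⊆ u.sets, t.Finite → (⋂₀ t).Nonempty := by
    intro t hts htf
    have hmem := key t htf hts
    rcases Set.eq_empty_or_nonempty (⋂₀ t) with h | h
    · rw [h] at hmem; exact absurd hmem u.empty_notMem
    · exact h
  haveI : (Filter.generate u.sets).NeBot := Filter.generate_neBot_iff.2 hfin
  obtain ⟨𝒰, h𝒰⟩ := Ultrafilter.exists_le (Filter.generate u.sets)
  have hmemU : ∀ a ∈ u.sets, a ∈ 𝒰 := fun a ha =>
    h𝒰 (Filter.mem_generate_iff.2 ⟨{a}, by simpa using ha, Set.finite_singleton a, by simp⟩)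
  set K : Set X :=
    {x | ∀ U : Set X, IsOpen U → x ∈ U → {H : Subcontinua X | (H.1 ∩ U).Nonempty} ∈ 𝒰}
    with hK
  -- members of 𝒰 are eventually inside any open set containing K
  have hsubW : ∀ W : Set X, IsOpen W → K ⊆ W → {H : Subcontinua X | H.1 ⊆ W} ∈ 𝒰 := by
    intro W hW hKW
    have hv : ∀ x : ↥(Wᶜ), ∃ U : Set X, IsOpen U ∧ (x : X) ∈ U ∧
        {H : Subcontinua X | (H.1 ∩ U).Nonempty} ∉ 𝒰 := by
      rintro ⟨x, hx⟩
      have hxK : x ∉ K := fun h => hx (hKW h)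
      simp only [hK, Set.mem_setOf_eq] at hxK
      push_neg at hxK
      obtain ⟨U, hU, hxU, hnU⟩ := hxK
      exact ⟨U, hU, hxU, hnU⟩
    choose Uf hUo hUx hUn using hv
    have hcov : Wᶜ ⊆ ⋃ i, Uf i := fun x hx => Set.mem_iUnion.2 ⟨⟨x, hx⟩, hUx ⟨x, hx⟩⟩
    obtain ⟨t, ht⟩ := (hW.isClosed_compl.isCompact).elim_finite_subcover Uf hUo hcov
    have hbig : (⋂ i ∈ t, {H : Subcontinua X | (H.1 ∩ Uf i).Nonempty}ᶜ) ∈ 𝒰 :=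
      (Filter.biInter_finset_mem t).2 fun i _ =>
        Ultrafilter.compl_mem_iff_notMem.2 (hUn i)
    refine Filter.mem_of_superset hbig ?_
    intro H hH
    simp only [Set.mem_iInter, Set.mem_compl_iff, Set.mem_setOf_eq] at hH
    simp only [Set.mem_setOf_eq]
    intro x hx
    by_contra hxW
    obtain ⟨i, hi, hxi⟩ := Set.mem_iUnion₂.1 (ht hxW)
    exact hH i hi ⟨x, hx, hxi⟩
  -- K is nonempty
  have hKne : K.Nonempty := by
    by_contra h
    rw [Set.not_nonempty_iff_eq_empty] at h
    have h1 := hsubW ∅ isOpen_empty (by rw [h])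
    have h2 : {H : Subcontinua X | H.1 ⊆ (∅ : Set X)} = ∅ := by
      rw [Set.eq_empty_iff_forall_notMem]
      intro H hH
      exact (sub_nonempty H).ne_empty (Set.subset_empty_iff.1 hH)
    rw [h2] at h1
    exact Filter.empty_notMem (𝒰 : Filter (Subcontinua X)) h1
  -- K is closed
  have hKcl : IsClosed K := by
    rw [← isOpen_compl_iff, isOpen_iff_forall_mem_open]
    intro x hx
    simp only [hK, Set.mem_compl_iff, Set.mem_setOf_eq] at hx
    push_neg at hx
    obtain ⟨U, hU, hxU, hnU⟩ := hx
    exact ⟨U, fun y hy hyK => hnU (hyK U hU hy), hU, hxU⟩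
  -- K is preconnected
  have hKpc : IsPreconnected K := by
    intro Uo Vo hUo hVo hKuv h1ne h2ne
    by_contra hne
    rw [Set.not_nonempty_iff_eq_empty] at hne
    obtain ⟨x, hxK, hxU⟩ := h1ne
    obtain ⟨y, hyK, hyV⟩ := h2ne
    have hPQ : Disjoint (K \ Vo) (K \ Uo) := by
      rw [Set.disjoint_iff_inter_eq_empty, Set.eq_empty_iff_forall_notMem]
      rintro z ⟨⟨hz1, hz2⟩, ⟨_, hz4⟩⟩
      rcases hKuv hz1 with h | h
      · exact hz4 h
      · exact hz2 h
    have hPc : IsClosed (K \ Vo) := hKcl.sdiff hVo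
    have hQc : IsClosed (K \ Uo) := hKcl.sdiff hUo
    obtain ⟨U', V', hU', hV', hPU', hQV', hUV'⟩ := normal_separation hPc hQc hPQ
    have hxP : x ∈ K \ Vo :=
      ⟨hxK, fun hv => Set.eq_empty_iff_forall_notMem.1 hne x ⟨hxK, hxU, hv⟩⟩
    have hyQ : y ∈ K \ Uo :=
      ⟨hyK, fun hu => Set.eq_empty_iff_forall_notMem.1 hne y ⟨hyK, hu, hyV⟩⟩
    have hKsub : K ⊆ U' ∪ V' := by
      intro z hz
      by_cases hzV : z ∈ Vo
      · by_cases hzU : z ∈ Uo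
        · exact absurd (Set.eq_empty_iff_forall_notMem.1 hne z ⟨hz, hzU, hzV⟩) not_false
        · exact Or.inr (hQV' ⟨hz, hzU⟩)
      · exact Or.inl (hPU' ⟨hz, hzV⟩)
    have h1 : {H : Subcontinua X | H.1 ⊆ U' ∪ V'} ∈ 𝒰 := hsubW _ (hU'.union hV') hKsub
    have h2 : {H : Subcontinua X | (H.1 ∩ U').Nonempty} ∈ 𝒰 := hxK U' hU' (hPU' hxP)
    have h3 : {H : Subcontinua X | (H.1 ∩ V').Nonempty} ∈ 𝒰 := hyK V' hV' (hQV' hyQ)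
    obtain ⟨H, hH1, hH2, hH3⟩ :=
      Filter.nonempty_of_mem (Filter.inter_mem h1 (Filter.inter_mem h2 h3))
    obtain ⟨z, _, hz⟩ := H.2.2.2 U' V' hU' hV' hH1 hH2 hH3
    exact Set.disjoint_left.1 hUV' hz.1 hz.2
  set KC : Subcontinua X := ⟨K, hKcl, hKne, hKpc⟩ with hKC
  -- 𝒰 converges to KC
  have hconv : (𝒰 : Filter (Subcontinua X)) ≤ nhds KC := by
    rw [TopologicalSpace.nhds_generateFrom]
    refine le_iInf₂ ?_
    rintro s ⟨hKs, hs⟩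
    rw [Filter.le_principal_iff]
    rcases hs with ⟨W, hW, rfl⟩ | ⟨W, hW, rfl⟩
    · exact hsubW W hW hKs
    · obtain ⟨x, hxK, hxW⟩ := hKs
      exact hxK W hW hxW
  -- closed members of 𝒰 contain KC
  have hclosedmem : ∀ a : Set (Subcontinua X), IsClosed a → a ∈ 𝒰 → KC ∈ a := by
    intro a hac ha
    have hcl : KC ∈ closure a := mem_closure_iff_ultrafilter.2 ⟨𝒰, ha, hconv⟩
    rwa [hac.closure_eq] at hcl
  refine ⟨KC, LUltra.ext' ?_⟩
  ext a
  show (LatGen (Bset X) a ∧ KC ∈ a) ↔ a ∈ u.sets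
  constructor
  · rintro ⟨haL, hKa⟩
    by_contra hnot
    obtain ⟨b, hb, hab⟩ := u.ultra a haL hnot
    have hKb : KC ∈ b := hclosedmem b (latGen_isClosed (u.sets_subset hb)) (hmemU b hb)
    exact Set.eq_empty_iff_forall_notMem.1 hab KC ⟨hKa, hKb⟩
  · intro ha
    exact ⟨u.sets_subset ha,
      hclosedmem a (latGen_isClosed (u.sets_subset ha)) (hmemU a ha)⟩

end WallmanSurj
section WallmanHomeo

variable {X : Type u} [TopologicalSpace X] [CompactSpace X] [T2Space X]

lemma image_toUltra {a : Set (Subcontinua X)} (ha : LatGen (Bset X) a) :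
    toUltra '' a = {u : LUltra (Lset X) | a ∈ u.sets} := by
  ext u
  constructor
  · rintro ⟨G, hGa, rfl⟩
    exact ⟨ha, hGa⟩
  · intro hu
    obtain ⟨G, rfl⟩ := toUltra_surjective u
    exact ⟨G, hu.2, rfl⟩

lemma continuous_toUltra : Continuous (toUltra (X := X)) := by
  apply continuous_generateFrom_iff.mpr
  rintro s ⟨a, haL, rfl⟩
  have hpre : toUltra (X := X) ⁻¹' {u : LUltra (Lset X) | a ∈ u.sets}ᶜ = aᶜ := by
    ext G
    simp only [Set.mem_preimage, Set.mem_compl_iff, Set.mem_setOf_eq]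
    constructor
    · intro h hGa; exact h ⟨haL, hGa⟩
    · intro h hmem; exact h hmem.2
  rw [hpre]
  exact (latGen_isClosed haL).isOpen_compl

lemma isOpenMap_toUltra : IsOpenMap (toUltra (X := X)) := by
  have hbij : Function.Bijective (toUltra (X := X)) :=
    ⟨toUltra_injective, toUltra_surjective⟩
  intro U hU
  have hU' : TopologicalSpace.GenerateOpen
      ({s | ∃ U : Set X, IsOpen U ∧ s = {A : Subcontinua X | A.1 ⊆ U}} ∪
       {s | ∃ U : Set X, IsOpen U ∧ s = {A : Subcontinua X | (A.1 ∩ U).Nonempty}}) U := hU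
  clear hU
  induction hU' with
  | basic s hs =>
      rcases hs with ⟨W, hW, rfl⟩ | ⟨W, hW, rfl⟩
      · have ha : LatGen (Bset X) {A : Subcontinua X | (A.1 ∩ Wᶜ).Nonempty} :=
          latGen_hits hW.isClosed_compl
        have hs2 : {A : Subcontinua X | A.1 ⊆ W} =
            {A : Subcontinua X | (A.1 ∩ Wᶜ).Nonempty}ᶜ := by
          ext A; simp [Set.inter_compl_nonempty_iff]
        rw [hs2, Set.image_compl_eq hbij, image_toUltra ha]
        exact TopologicalSpace.isOpen_generateFrom_of_mem ⟨_, ha, rfl⟩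
      · have ha : LatGen (Bset X) {A : Subcontinua X | A.1 ⊆ Wᶜ} :=
          latGen_subset hW.isClosed_compl
        have hs2 : {A : Subcontinua X | (A.1 ∩ W).Nonempty} =
            {A : Subcontinua X | A.1 ⊆ Wᶜ}ᶜ := by
          ext A
          simp only [Set.mem_setOf_eq, Set.mem_compl_iff]
          rw [← Set.inter_compl_nonempty_iff, compl_compl]
        rw [hs2, Set.image_compl_eq hbij, image_toUltra ha]
        exact TopologicalSpace.isOpen_generateFrom_of_mem ⟨_, ha, rfl⟩
  | univ =>
      rw [Set.image_univ, Function.Surjective.range_eq toUltra_surjective]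
      exact isOpen_univ
  | inter s t _ _ ihs iht =>
      rw [Set.image_inter toUltra_injective]
      exact ihs.inter iht
  | sUnion S _ ih =>
      rw [Set.image_sUnion]
      exact isOpen_sUnion (by rintro _ ⟨t, htS, rfl⟩; exact ih t htS)

end WallmanHomeo

/-- For a compact Hausdorff space `X`, the hyperspace `C(X)` with the
Vietoris topology is homeomorphic to the Wallman space of the lattice `K*` generated under
finite unions and intersections by the sets `F*`, for finite families `F` of closed subsets
of `X`. -/
theorem hyperspace_homeomorph_wallman (X : Type u) [TopologicalSpace X] [CompactSpace X]
    [T2Space X] :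
    Nonempty (Subcontinua X ≃ₜ
      LUltra {S | LatGen {S | ∃ F : Finset (Set X), (∀ s ∈ F, IsClosed s) ∧ S = starSet F}
        S}) := by
  exact ⟨Equiv.toHomeomorphOfContinuousOpen
    (Equiv.ofBijective toUltra ⟨toUltra_injective, toUltra_surjective⟩)
    continuous_toUltra isOpenMap_toUltra⟩
end
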